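/- arXiv:math/9810100 — 7 statements merged into one kernel-verified Lean document; each statement's English description precedes it below -/
import Mathlib

section
/- Let B be a row-finite 0-1 matrix on V and let C be the primitive transfer of B at p with data (K, M). Then: (a) for every j ∈ V with B p j = 1 and j ∉ K there is a unique m ∈ M with B m j = 1; and (b) the map φ which sends an infinite path x of B to the sequence obtained from x by inserting, between each pair of consecutive positions with x n = p and x (n+1) = j where j ∉ K, the unique m ∈ M satisfying B m j = 1, is a well-defined bijection from the set of infinite paths of B onto the set of infinite paths of C. -/
/-- A 0-1 matrix on an index type `V`. -/
def IsZeroOne {V : Type*} (B : V → V → ℕ) : Prop := ∀ i j, B i j = 0 ∨ B i j = 1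

/-- `B` is row-finite: each row has finitely many nonzero entries. -/
def RowFinite {V : Type*} (B : V → V → ℕ) : Prop := ∀ i, {j | B i j ≠ 0}.Finite

/-- `C` is the primitive transfer of `B` at `p` with data `(K, M)`. -/
structure IsPrimitiveTransfer {V : Type*} [DecidableEq V] (B C : V → V → ℕ)
    (p : V) (K M : Finset V) : Prop where
  zeroOne : IsZeroOne B
  disjKM : Disjoint K M
  p_not_mem_M : p ∉ M
  row_p_nonzero : ∃ j, B p j ≠ 0
  row_m_nonzero : ∀ m ∈ M, ∃ j, B m j ≠ 0
  row_eq : ∀ j, B p j = (if j ∈ K then 1 else 0) + ∑ m ∈ M, B m j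
  transfer : ∀ i j, C i j = if i = p then (if j ∈ K ∪ M then 1 else 0) else B i j

/-- An infinite path of a 0-1 matrix `B`. -/
def IsPath {V : Type*} (B : V → V → ℕ) (x : ℕ → V) : Prop := ∀ n, B (x n) (x (n + 1)) = 1

/-- `y` is obtained from `x` by inserting, between each pair of consecutive positions with
`x n = p` and `x (n+1) ∉ K`, a vertex `m ∈ M` with `B m (x (n+1)) = 1`.  The strictly
increasing re-indexing function `σ` records the positions of the original entries. -/
def InsertRel {V : Type*} [DecidableEq V] (B : V → V → ℕ) (p : V) (K M : Finset V)
    (x y : ℕ → V) : Prop :=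
  ∃ σ : ℕ → ℕ, σ 0 = 0 ∧ (∀ n, y (σ n) = x n) ∧
    ∀ n, ((x n = p ∧ x (n + 1) ∉ K) →
            σ (n + 1) = σ n + 2 ∧ y (σ n + 1) ∈ M ∧ B (y (σ n + 1)) (x (n + 1)) = 1) ∧
         (¬(x n = p ∧ x (n + 1) ∉ K) → σ (n + 1) = σ n + 1)

section Aux

variable {V : Type*} [DecidableEq V]

/-- Condition at step `n` for inserting a vertex. -/
def pcond (p : V) (K : Finset V) (x : ℕ → V) (n : ℕ) : Prop :=
  x n = p ∧ x (n + 1) ∉ K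

instance (p : V) (K : Finset V) (x : ℕ → V) (n : ℕ) : Decidable (pcond p K x n) :=
  inferInstanceAs (Decidable (_ ∧ _))

/-- Re-indexing function for the inserted sequence. -/
def sig (p : V) (K : Finset V) (x : ℕ → V) : ℕ → ℕ
  | 0 => 0
  | n + 1 => sig p K x n + if pcond p K x n then 2 else 1

/-- Condition at position `t` for deleting the next vertex. -/
def dcond (p : V) (M : Finset V) (y : ℕ → V) (t : ℕ) : Prop :=
  y t = p ∧ y (t + 1) ∈ M

instance (p : V) (M : Finset V) (y : ℕ → V) (t : ℕ) : Decidable (dcond p M y t) :=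
  inferInstanceAs (Decidable (_ ∧ _))

/-- Re-indexing function for the deleted sequence. -/
def tau (p : V) (M : Finset V) (y : ℕ → V) : ℕ → ℕ
  | 0 => 0
  | n + 1 => tau p M y n + if dcond p M y (tau p M y n) then 2 else 1

/-- The sequence obtained from a `C`-path by deleting inserted vertices. -/
def xOf (p : V) (M : Finset V) (y : ℕ → V) (n : ℕ) : V := y (tau p M y n)

variable {B C : V → V → ℕ} {p : V} {K M : Finset V}

lemma sig_succ (p : V) (K : Finset V) (x : ℕ → V) (n : ℕ) :
    sig p K x (n + 1) = sig p K x n + if pcond p K x n then 2 else 1 := rfl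

lemma tau_succ (p : V) (M : Finset V) (y : ℕ → V) (n : ℕ) :
    tau p M y (n + 1) = tau p M y n + if dcond p M y (tau p M y n) then 2 else 1 := rfl

lemma sig_lt_succ (p : V) (K : Finset V) (x : ℕ → V) (n : ℕ) :
    sig p K x n < sig p K x (n + 1) := by
  rw [sig_succ]; split <;> omega

lemma sig_strictMono (p : V) (K : Finset V) (x : ℕ → V) : StrictMono (sig p K x) :=
  strictMono_nat_of_lt_succ (sig_lt_succ p K x)

lemma sig_exists (p : V) (K : Finset V) (x : ℕ → V) (k : ℕ) :
    ∃ n, sig p K x n ≤ k ∧ k < sig p K x (n + 1) := by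
  induction k with
  | zero => exact ⟨0, Nat.le_refl _, by have := sig_lt_succ p K x 0; simpa [sig] using this⟩
  | succ k ih =>
    obtain ⟨n, h1, h2⟩ := ih
    by_cases hk : k + 1 < sig p K x (n + 1)
    · exact ⟨n, by omega, hk⟩
    · exact ⟨n + 1, by omega, by have := sig_lt_succ p K x (n + 1); omega⟩

/-- Index of the block containing position `k`. -/
noncomputable def idx (p : V) (K : Finset V) (x : ℕ → V) (k : ℕ) : ℕ :=
  (sig_exists p K x k).choose

lemma idx_spec (p : V) (K : Finset V) (x : ℕ → V) (k : ℕ) :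
    sig p K x (idx p K x k) ≤ k ∧ k < sig p K x (idx p K x k + 1) :=
  (sig_exists p K x k).choose_spec

lemma idx_unique {x : ℕ → V} {k n : ℕ} (h1 : sig p K x n ≤ k) (h2 : k < sig p K x (n + 1)) :
    idx p K x k = n := by
  obtain ⟨a1, a2⟩ := idx_spec p K x k
  have b1 : idx p K x k < n + 1 :=
    (sig_strictMono p K x).lt_iff_lt.mp (lt_of_le_of_lt a1 h2)
  have b2 : n < idx p K x k + 1 :=
    (sig_strictMono p K x).lt_iff_lt.mp (lt_of_le_of_lt h1 a2)
  omega

lemma idx_sig (p : V) (K : Finset V) (x : ℕ → V) (n : ℕ) : idx p K x (sig p K x n) = n :=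
  idx_unique (Nat.le_refl _) (sig_lt_succ p K x n)

/-- The chosen inserted vertex. -/
noncomputable def mch (B : V → V → ℕ) (M : Finset V) (p : V) (x : ℕ → V) (n : ℕ) : V :=
  if hc : ∃ m, m ∈ M ∧ B m (x (n + 1)) = 1 then hc.choose else p

/-- The inserted sequence. -/
noncomputable def yOf (B : V → V → ℕ) (p : V) (K M : Finset V) (x : ℕ → V) (k : ℕ) : V :=
  if k = sig p K x (idx p K x k) then x (idx p K x k) else mch B M p x (idx p K x k)

/-! ### Matrix facts -/

lemma exu (h : IsPrimitiveTransfer B C p K M) {j : V} (hj : B p j = 1) (hjK : j ∉ K) :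
    ∃! m, m ∈ M ∧ B m j = 1 := by
  have hr := h.row_eq j
  rw [if_neg hjK] at hr
  have hs : ∑ m ∈ M, B m j = 1 := by omega
  have hex : ∃ m ∈ M, B m j = 1 := by
    by_contra hc
    push_neg at hc
    have : ∑ m ∈ M, B m j = 0 := Finset.sum_eq_zero (fun m hm => by
      rcases h.zeroOne m j with h0 | h1
      · exact h0
      · exact absurd h1 (hc m hm))
    omega
  obtain ⟨m, hm, hm1⟩ := hex
  refine ⟨m, ⟨hm, hm1⟩, ?_⟩
  rintro m' ⟨hm', hm'1⟩
  by_contra hne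
  have h1 : ∑ k ∈ M.erase m, B k j + B m j = ∑ k ∈ M, B k j := Finset.sum_erase_add M _ hm
  have h2 : B m' j ≤ ∑ k ∈ M.erase m, B k j :=
    Finset.single_le_sum (f := fun k => B k j) (fun i _ => Nat.zero_le _) (Finset.mem_erase.mpr ⟨hne, hm'⟩)
  omega

lemma Bm_zero_of_K (h : IsPrimitiveTransfer B C p K M) {j : V} (hj : j ∈ K)
    {m : V} (hm : m ∈ M) : B m j = 0 := by
  have hr := h.row_eq j
  rw [if_pos hj] at hr
  have hp := h.zeroOne p j
  have h2 : B m j ≤ ∑ k ∈ M, B k j :=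
    Finset.single_le_sum (f := fun k => B k j) (fun i _ => Nat.zero_le _) hm
  omega

lemma Bp_one_of_K (h : IsPrimitiveTransfer B C p K M) {j : V} (hj : j ∈ K) : B p j = 1 := by
  have hr := h.row_eq j
  rw [if_pos hj] at hr
  have hp := h.zeroOne p j
  omega

lemma Bp_one_of_M (h : IsPrimitiveTransfer B C p K M) {j m : V} (hm : m ∈ M)
    (hb : B m j = 1) : B p j = 1 := by
  have hr := h.row_eq j
  have hp := h.zeroOne p j
  have h2 : B m j ≤ ∑ k ∈ M, B k j :=
    Finset.single_le_sum (f := fun k => B k j) (fun i _ => Nat.zero_le _) hm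
  have : (if j ∈ K then 1 else 0) ≥ 0 := Nat.zero_le _
  split at hr <;> omega

/-! ### Properties of the inserted sequence -/

lemma mch_spec (h : IsPrimitiveTransfer B C p K M) {x : ℕ → V} (hx : IsPath B x) {n : ℕ}
    (hc : pcond p K x n) : mch B M p x n ∈ M ∧ B (mch B M p x n) (x (n + 1)) = 1 := by
  have hp1 : B p (x (n + 1)) = 1 := by have := hx n; rwa [hc.1] at this
  have hex : ∃ m, m ∈ M ∧ B m (x (n + 1)) = 1 := (exu h hp1 hc.2).exists
  rw [mch, dif_pos hex]
  exact hex.choose_spec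

lemma yOf_sig (B : V → V → ℕ) (p : V) (K M : Finset V) (x : ℕ → V) (n : ℕ) :
    yOf B p K M x (sig p K x n) = x n := by
  rw [yOf, idx_sig, if_pos rfl]

lemma yOf_mid (B : V → V → ℕ) {x : ℕ → V} {n : ℕ} (hc : pcond p K x n) (M : Finset V) :
    yOf B p K M x (sig p K x n + 1) = mch B M p x n := by
  have hs : sig p K x (n + 1) = sig p K x n + 2 := by rw [sig_succ, if_pos hc]
  have hi : idx p K x (sig p K x n + 1) = n := idx_unique (by omega) (by omega)
  rw [yOf, hi, if_neg (by omega)]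

lemma yOf_path (h : IsPrimitiveTransfer B C p K M) {x : ℕ → V} (hx : IsPath B x) :
    IsPath C (yOf B p K M x) := by
  intro k
  obtain ⟨h1, h2⟩ := idx_spec p K x k
  set n := idx p K x k with hn
  by_cases hk : k = sig p K x n
  · by_cases hc : pcond p K x n
    · have hs : sig p K x (n + 1) = sig p K x n + 2 := by rw [sig_succ, if_pos hc]
      have e1 : yOf B p K M x k = x n := by rw [hk, yOf_sig]
      have e2 : yOf B p K M x (k + 1) = mch B M p x n := by rw [hk]; exact yOf_mid B hc M
      rw [e1, e2, h.transfer, hc.1, if_pos rfl,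
        if_pos (Finset.mem_union.mpr (Or.inr (mch_spec h hx hc).1))]
    · have hs : sig p K x (n + 1) = sig p K x n + 1 := by rw [sig_succ, if_neg hc]
      have e1 : yOf B p K M x k = x n := by rw [hk, yOf_sig]
      have e2 : yOf B p K M x (k + 1) = x (n + 1) := by
        have : k + 1 = sig p K x (n + 1) := by omega
        rw [this, yOf_sig]
      by_cases hp : x n = p
      · have hK : x (n + 1) ∈ K := by by_contra hK; exact hc ⟨hp, hK⟩
        rw [e1, e2, hp, h.transfer, if_pos rfl, if_pos (Finset.mem_union.mpr (Or.inl hK))]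
      · rw [e1, e2, h.transfer, if_neg hp]; exact hx n
  · have hc : pcond p K x n := by
      by_contra hc
      have : sig p K x (n + 1) = sig p K x n + 1 := by rw [sig_succ, if_neg hc]
      omega
    have hs : sig p K x (n + 1) = sig p K x n + 2 := by rw [sig_succ, if_pos hc]
    have hk1 : k = sig p K x n + 1 := by omega
    have e1 : yOf B p K M x k = mch B M p x n := by rw [hk1]; exact yOf_mid B hc M
    have e2 : yOf B p K M x (k + 1) = x (n + 1) := by
      have : k + 1 = sig p K x (n + 1) := by omega
      rw [this, yOf_sig]
    obtain ⟨hm, hb⟩ := mch_spec h hx hc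
    have hne : mch B M p x n ≠ p := fun e => h.p_not_mem_M (e ▸ hm)
    rw [e1, e2, h.transfer, if_neg hne]
    exact hb

/-! ### Properties of the deleted sequence -/

lemma C_succ_mem (h : IsPrimitiveTransfer B C p K M) {y : ℕ → V} (hy : IsPath C y)
    {t : ℕ} (ht : y t = p) : y (t + 1) ∈ K ∪ M := by
  have hc := hy t
  rw [h.transfer, if_pos ht] at hc
  by_contra hm
  rw [if_neg hm] at hc
  omega

lemma xOf_path (h : IsPrimitiveTransfer B C p K M) {y : ℕ → V} (hy : IsPath C y) :
    IsPath B (xOf p M y) := by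
  intro n
  set t := tau p M y n with htdef
  show B (y t) (y (tau p M y (n + 1))) = 1
  rw [tau_succ, ← htdef]
  by_cases hd : dcond p M y t
  · rw [if_pos hd]
    have hm : y (t + 1) ∈ M := hd.2
    have hne : y (t + 1) ≠ p := fun e => h.p_not_mem_M (e ▸ hm)
    have hB : B (y (t + 1)) (y (t + 2)) = 1 := by
      have := hy (t + 1); rwa [h.transfer, if_neg hne] at this
    rw [hd.1]
    exact Bp_one_of_M h hm hB
  · rw [if_neg hd]
    by_cases hp : y t = p
    · have hKM := C_succ_mem h hy hp
      have hM : y (t + 1) ∉ M := fun hm => hd ⟨hp, hm⟩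
      have hK : y (t + 1) ∈ K := (Finset.mem_union.mp hKM).resolve_right hM
      rw [hp]
      exact Bp_one_of_K h hK
    · have := hy t; rwa [h.transfer, if_neg hp] at this

/-! ### Round trips -/

lemma tau_yOf (h : IsPrimitiveTransfer B C p K M) {x : ℕ → V} (hx : IsPath B x) :
    ∀ n, tau p M (yOf B p K M x) n = sig p K x n := by
  intro n
  induction n with
  | zero => rfl
  | succ n ih =>
    have hiff : dcond p M (yOf B p K M x) (sig p K x n) ↔ pcond p K x n := by
      constructor
      · rintro ⟨hp, hm⟩
        rw [yOf_sig] at hp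
        refine ⟨hp, fun hK => ?_⟩
        have hnp : ¬ pcond p K x n := fun hc => hc.2 hK
        have hs : sig p K x (n + 1) = sig p K x n + 1 := by rw [sig_succ, if_neg hnp]
        have he : yOf B p K M x (sig p K x n + 1) = x (n + 1) := by rw [← hs, yOf_sig]
        rw [he] at hm
        exact Finset.disjoint_left.mp h.disjKM hK hm
      · intro hc
        refine ⟨by rw [yOf_sig]; exact hc.1, ?_⟩
        rw [yOf_mid B hc M]
        exact (mch_spec h hx hc).1
    rw [tau_succ, ih, sig_succ]
    by_cases hc : pcond p K x n
    · rw [if_pos (hiff.mpr hc), if_pos hc]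
    · rw [if_neg (fun hd => hc (hiff.mp hd)), if_neg hc]

lemma sig_xOf (h : IsPrimitiveTransfer B C p K M) {y : ℕ → V} (hy : IsPath C y) :
    ∀ n, sig p K (xOf p M y) n = tau p M y n := by
  intro n
  induction n with
  | zero => rfl
  | succ n ih =>
    set t := tau p M y n with htdef
    have hiff : pcond p K (xOf p M y) n ↔ dcond p M y t := by
      constructor
      · rintro ⟨hp, hK⟩
        have hyp : y t = p := hp
        refine ⟨hyp, ?_⟩
        by_contra hm
        have hnd : ¬ dcond p M y t := fun hd => hm hd.2
        have hs : tau p M y (n + 1) = t + 1 := by rw [tau_succ, ← htdef, if_neg hnd]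
        have hKM := C_succ_mem h hy hyp
        have hKmem : y (t + 1) ∈ K := (Finset.mem_union.mp hKM).resolve_right hm
        apply hK
        show y (tau p M y (n + 1)) ∈ K
        rw [hs]; exact hKmem
      · intro hd
        refine ⟨hd.1, ?_⟩
        have hs : tau p M y (n + 1) = t + 2 := by rw [tau_succ, ← htdef, if_pos hd]
        show y (tau p M y (n + 1)) ∉ K
        rw [hs]
        intro hK
        have hm : y (t + 1) ∈ M := hd.2
        have hne : y (t + 1) ≠ p := fun e => h.p_not_mem_M (e ▸ hm)
        have hB : B (y (t + 1)) (y (t + 2)) = 1 := by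
          have := hy (t + 1); rwa [h.transfer, if_neg hne] at this
        have := Bm_zero_of_K h hK hm
        omega
    rw [sig_succ, tau_succ, ih, ← htdef]
    by_cases hc : dcond p M y t
    · rw [if_pos (hiff.mpr hc), if_pos hc]
    · rw [if_neg (fun hp => hc (hiff.mp hp)), if_neg hc]

lemma yOf_xOf (h : IsPrimitiveTransfer B C p K M) {y : ℕ → V} (hy : IsPath C y) :
    ∀ k, yOf B p K M (xOf p M y) k = y k := by
  intro k
  have hx : IsPath B (xOf p M y) := xOf_path h hy
  set x := xOf p M y with hxdef
  have hst : ∀ n, sig p K x n = tau p M y n := sig_xOf h hy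
  obtain ⟨h1, h2⟩ := idx_spec p K x k
  set n := idx p K x k with hn
  by_cases hk : k = sig p K x n
  · rw [hk, yOf_sig]
    show y (tau p M y n) = y (sig p K x n)
    rw [hst]
  · have hc : pcond p K x n := by
      by_contra hc
      have : sig p K x (n + 1) = sig p K x n + 1 := by rw [sig_succ, if_neg hc]
      omega
    have hs : sig p K x (n + 1) = sig p K x n + 2 := by rw [sig_succ, if_pos hc]
    have hk1 : k = sig p K x n + 1 := by omega
    have e1 : yOf B p K M x k = mch B M p x n := by rw [hk1]; exact yOf_mid B hc M
    -- show mch = y (tau n + 1)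
    have hτ : tau p M y (n + 1) = tau p M y n + 2 := by rw [← hst, ← hst, hs]
    have hd : dcond p M y (tau p M y n) := by
      by_contra hd
      rw [tau_succ, if_neg hd] at hτ
      omega
    have hm : y (tau p M y n + 1) ∈ M := hd.2
    have hne : y (tau p M y n + 1) ≠ p := fun e => h.p_not_mem_M (e ▸ hm)
    have hB : B (y (tau p M y n + 1)) (y (tau p M y n + 2)) = 1 := by
      have := hy (tau p M y n + 1); rwa [h.transfer, if_neg hne] at this
    have hx1 : x (n + 1) = y (tau p M y n + 2) := by
      show y (tau p M y (n + 1)) = _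
      rw [hτ]
    have hp1 : B p (x (n + 1)) = 1 := by have := hx n; rwa [hc.1] at this
    have hu := exu h hp1 hc.2
    have e2 : mch B M p x n = y (tau p M y n + 1) :=
      hu.unique ⟨(mch_spec h hx hc).1, (mch_spec h hx hc).2⟩ ⟨hm, by rw [hx1]; exact hB⟩
    rw [e1, e2, hk1, hst]

end Aux

theorem stmt_2 {V : Type*} [DecidableEq V] (B C : V → V → ℕ) (p : V) (K M : Finset V)
    (hrf : RowFinite B) (h : IsPrimitiveTransfer B C p K M) :
    (∀ j, B p j = 1 → j ∉ K → ∃! m, m ∈ M ∧ B m j = 1) ∧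
    ∃ φ : {x : ℕ → V // IsPath B x} → {y : ℕ → V // IsPath C y},
      Function.Bijective φ ∧
      ∀ x : {x : ℕ → V // IsPath B x}, InsertRel B p K M x.1 (φ x).1 := by
  constructor
  · intro j hj hjK
    exact exu h hj hjK
  · refine ⟨fun x => ⟨yOf B p K M x.1, yOf_path h x.2⟩, ?_, ?_⟩
    · rw [Function.bijective_iff_has_inverse]
      refine ⟨fun y => ⟨xOf p M y.1, xOf_path h y.2⟩, ?_, ?_⟩
      · intro x
        apply Subtype.ext
        funext n
        show xOf p M (yOf B p K M x.1) n = x.1 n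
        rw [xOf, tau_yOf h x.2, yOf_sig]
      · intro y
        exact Subtype.ext (funext (yOf_xOf h y.2))
    · intro x
      refine ⟨sig p K x.1, rfl, fun n => yOf_sig B p K M x.1 n, fun n => ⟨?_, ?_⟩⟩
      · intro hc
        have hc' : pcond p K x.1 n := hc
        refine ⟨by rw [sig_succ, if_pos hc'], ?_, ?_⟩
        · show yOf B p K M x.1 (sig p K x.1 n + 1) ∈ M
          rw [yOf_mid B hc' M]; exact (mch_spec h x.2 hc').1
        · show B (yOf B p K M x.1 (sig p K x.1 n + 1)) (x.1 (n + 1)) = 1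
          rw [yOf_mid B hc' M]; exact (mch_spec h x.2 hc').2
      · intro hc
        have hc' : ¬ pcond p K x.1 n := hc
        rw [sig_succ, if_neg hc']
end

section
/- Let B be a row-finite 0-1 matrix on V and let C be a primitive transfer of B at p with data (K, M). Then the path groupoids 𝒢_B and 𝒢_C are algebraically isomorphic: there exist a bijection φ from the infinite paths of B onto the infinite paths of C and a function λ : 𝒢_B → ℤ such that (x,k,y) ↦ (φ x, λ(x,k,y), φ y) is a bijection from 𝒢_B onto 𝒢_C and λ(x,k,y) + λ(y,l,z) = λ(x,k+l,z) whenever (x,k,y), (y,l,z) ∈ 𝒢_B. -/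
/-- `x ∼ₖ y` : `x n = y (n - k)` for all large `n`. -/
def SEquiv {W : Type*} (x : ℕ → W) (k : ℤ) (y : ℕ → W) : Prop :=
  ∃ N : ℕ, (N : ℤ) ≥ k ∧ ∀ n ≥ N, x n = y (((n : ℤ) - k).toNat)

/-- The path groupoid of `B`, as a set of triples `(x, k, y)`. -/
def Grpd {V : Type*} (B : V → V → ℕ) : Set ((ℕ → V) × ℤ × (ℕ → V)) :=
  {t | IsPath B t.1 ∧ IsPath B t.2.2 ∧ SEquiv t.1 t.2.1 t.2.2}


namespace PT
variable {V : Type*} [DecidableEq V]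

/-- insertion condition -/
def insP (B : V → V → ℕ) (p : V) (K : Finset V) (x : ℕ → V) (n : ℕ) : Prop :=
  x n = p ∧ x (n+1) ∉ K

instance (B : V → V → ℕ) (p : V) (K : Finset V) (x : ℕ → V) (n : ℕ) :
    Decidable (insP B p K x n) :=
  inferInstanceAs (Decidable (_ ∧ _))

noncomputable def mfunF (B : V → V → ℕ) (p : V) (M : Finset V) (x : ℕ → V) (n : ℕ) : V :=
  if h : (M.filter fun m => B m (x (n+1)) ≠ 0).Nonempty then h.choose else p

def posF (B : V → V → ℕ) (p : V) (K : Finset V) (x : ℕ → V) : ℕ → ℕ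
  | 0 => 0
  | n+1 => posF B p K x n + (if insP B p K x n then 2 else 1)

def gF (B : V → V → ℕ) (p : V) (K : Finset V) (x : ℕ → V) : ℕ → ℕ × Bool
  | 0 => (0, false)
  | i+1 =>
    let s := gF B p K x i
    if s.2 then (s.1 + 1, false)
    else if insP B p K x s.1 then (s.1, true) else (s.1 + 1, false)

noncomputable def phiF (B : V → V → ℕ) (p : V) (K M : Finset V) (x : ℕ → V) (i : ℕ) : V :=
  let s := gF B p K x i
  if s.2 then mfunF B p M x s.1 else x s.1

def delP (p : V) (M : Finset V) (y : ℕ → V) (i : ℕ) : Prop :=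
  y i = p ∧ y (i+1) ∈ M

instance (p : V) (M : Finset V) (y : ℕ → V) (i : ℕ) : Decidable (delP p M y i) :=
  inferInstanceAs (Decidable (_ ∧ _))

def eF (p : V) (M : Finset V) (y : ℕ → V) : ℕ → ℕ
  | 0 => 0
  | n+1 => eF p M y n + (if delP p M y (eF p M y n) then 2 else 1)

def psiF (p : V) (M : Finset V) (y : ℕ → V) (n : ℕ) : V := y (eF p M y n)

def LamW (B : V → V → ℕ) (p : V) (K : Finset V) (x : ℕ → V) (k : ℤ) (y : ℕ → V) (d : ℤ) : Prop :=
  ∃ N : ℕ, (N : ℤ) ≥ k ∧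
    ∀ n ≥ N, (posF B p K x n : ℤ) - (posF B p K y (((n : ℤ) - k).toNat) : ℤ) = d

open Classical in
noncomputable def lamF (B : V → V → ℕ) (p : V) (K : Finset V)
    (x : ℕ → V) (k : ℤ) (y : ℕ → V) : ℤ :=
  if h : ∃ d, LamW B p K x k y d then h.choose else 0

section lemmas
variable {B C : V → V → ℕ} {p : V} {K M : Finset V}

lemma pos_succ (x : ℕ → V) (n : ℕ) :
    posF B p K x (n+1) = posF B p K x n + (if insP B p K x n then 2 else 1) := rfl

lemma pos_lt (x : ℕ → V) (n : ℕ) : posF B p K x n < posF B p K x (n+1) := by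
  rw [pos_succ]; split <;> omega

lemma pos_strictMono (x : ℕ → V) : StrictMono (posF B p K x) :=
  strictMono_nat_of_lt_succ (pos_lt x)

lemma pos_ge (x : ℕ → V) (n : ℕ) : n ≤ posF B p K x n := by
  induction n with
  | zero => simp [posF]
  | succ n ih => have := pos_lt (B := B) (p := p) (K := K) x n; omega

lemma g_pos (x : ℕ → V) (n : ℕ) : gF B p K x (posF B p K x n) = (n, false) := by
  induction n with
  | zero => simp [posF, gF]
  | succ n ih =>
    rw [pos_succ]
    by_cases hi : insP B p K x n
    · have h1 : gF B p K x (posF B p K x n + 1) = (n, true) := by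
        rw [gF, ih]; simp [hi]
      simp only [hi, if_true]
      show gF B p K x (posF B p K x n + 1 + 1) = _
      rw [gF, h1]; simp
    · simp only [hi, if_false]
      rw [gF, ih]; simp [hi]

lemma g_pos' (x : ℕ → V) (n : ℕ) (hi : insP B p K x n) :
    gF B p K x (posF B p K x n + 1) = (n, true) := by
  rw [gF, g_pos]; simp [hi]

lemma g_spec (x : ℕ → V) (i : ℕ) :
    ∃ n, (gF B p K x i = (n, false) ∧ posF B p K x n = i) ∨
      (gF B p K x i = (n, true) ∧ insP B p K x n ∧ posF B p K x n + 1 = i) := by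
  induction i with
  | zero => exact ⟨0, Or.inl ⟨rfl, rfl⟩⟩
  | succ i ih =>
    obtain ⟨n, h1 | h1⟩ := ih
    · by_cases hi : insP B p K x n
      · refine ⟨n, Or.inr ⟨?_, hi, by omega⟩⟩
        rw [gF, h1.1]; simp [hi]
      · refine ⟨n+1, Or.inl ⟨?_, ?_⟩⟩
        · rw [gF, h1.1]; simp [hi]
        · rw [pos_succ]; simp [hi]; omega
    · refine ⟨n+1, Or.inl ⟨?_, ?_⟩⟩
      · rw [gF, h1.1]; simp
      · rw [pos_succ]; simp [h1.2.1]; omega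

lemma phi_at_pos (x : ℕ → V) (n : ℕ) : phiF B p K M x (posF B p K x n) = x n := by
  unfold phiF; rw [g_pos]; simp

lemma phi_at_pos' (x : ℕ → V) (n : ℕ) (hi : insP B p K x n) :
    phiF B p K M x (posF B p K x n + 1) = mfunF B p M x n := by
  unfold phiF; rw [g_pos' x n hi]; simp

lemma e_succ (y : ℕ → V) (n : ℕ) :
    eF p M y (n+1) = eF p M y n + (if delP p M y (eF p M y n) then 2 else 1) := rfl

lemma e_lt (y : ℕ → V) (n : ℕ) : eF p M y n < eF p M y (n+1) := by
  rw [e_succ]; split <;> omega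

lemma e_strictMono (y : ℕ → V) : StrictMono (eF p M y) :=
  strictMono_nat_of_lt_succ (e_lt y)

lemma e_ge (y : ℕ → V) (n : ℕ) : n ≤ eF p M y n := by
  induction n with
  | zero => simp [eF]
  | succ n ih => have := e_lt (p := p) (M := M) y n; omega


lemma C_ne (h : IsPrimitiveTransfer B C p K M) {i : V} (hi : i ≠ p) (j : V) :
    C i j = B i j := by rw [h.transfer]; simp [hi]

lemma C_p (h : IsPrimitiveTransfer B C p K M) (j : V) :
    C p j = if j ∈ K ∪ M then 1 else 0 := by rw [h.transfer]; simp

lemma B_one (h : IsPrimitiveTransfer B C p K M) {i j : V} (hij : B i j ≠ 0) : B i j = 1 :=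
  (h.zeroOne i j).resolve_left hij

lemma sum_le_one (h : IsPrimitiveTransfer B C p K M) (j : V) :
    ∑ m ∈ M, B m j ≤ 1 := by
  have h2 := h.row_eq j
  rcases h.zeroOne p j with h0 | h0 <;> rw [h0] at h2 <;> split at h2 <;> omega

lemma mfun_eq (h : IsPrimitiveTransfer B C p K M) {x : ℕ → V} {n : ℕ} {m' : V}
    (hm' : m' ∈ M) (h1 : B m' (x (n+1)) ≠ 0) : mfunF B p M x n = m' := by
  have hne : (M.filter fun m => B m (x (n+1)) ≠ 0).Nonempty :=
    ⟨m', Finset.mem_filter.2 ⟨hm', h1⟩⟩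
  have hch := hne.choose_spec
  rw [Finset.mem_filter] at hch
  rw [mfunF, dif_pos hne]
  by_contra hc
  have hsub : ({hne.choose, m'} : Finset V) ⊆ M := by
    intro a ha
    rcases Finset.mem_insert.1 ha with rfl | ha
    · exact hch.1
    · rw [Finset.mem_singleton.1 ha]; exact hm'
  have hle : ∑ m ∈ ({hne.choose, m'} : Finset V), B m (x (n+1)) ≤ ∑ m ∈ M, B m (x (n+1)) :=
    Finset.sum_le_sum_of_subset hsub
  rw [Finset.sum_pair hc] at hle
  have := sum_le_one h (x (n+1))
  omega

lemma mfun_good (h : IsPrimitiveTransfer B C p K M) {x : ℕ → V} (hx : IsPath B x)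
    {n : ℕ} (hi : insP B p K x n) :
    mfunF B p M x n ∈ M ∧ B (mfunF B p M x n) (x (n+1)) = 1 ∧ mfunF B p M x n ≠ p := by
  have hp : B p (x (n+1)) = 1 := by rw [← hi.1]; exact hx n
  have h2 := h.row_eq (x (n+1))
  rw [if_neg hi.2] at h2
  have hsum : ∑ m ∈ M, B m (x (n+1)) ≠ 0 := by omega
  obtain ⟨m', hm', hm'1⟩ := Finset.exists_ne_zero_of_sum_ne_zero hsum
  have he := mfun_eq h hm' hm'1
  rw [he]
  exact ⟨hm', B_one h hm'1, fun hc => h.p_not_mem_M (hc ▸ hm')⟩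

lemma g_pos_succ (x : ℕ → V) {n : ℕ} (hi : ¬ insP B p K x n) :
    gF B p K x (posF B p K x n + 1) = (n+1, false) := by
  rw [gF, g_pos]; simp [hi]

lemma phi_path (h : IsPrimitiveTransfer B C p K M) {x : ℕ → V} (hx : IsPath B x) :
    IsPath C (phiF B p K M x) := by
  intro i
  obtain ⟨n, ⟨hg, hpos⟩ | ⟨hg, hi, hpos⟩⟩ := g_spec (B := B) (p := p) (K := K) x i
  · have hv : phiF B p K M x i = x n := by unfold phiF; rw [hg]; simp
    by_cases hi : insP B p K x n
    · have hv2 : phiF B p K M x (i+1) = mfunF B p M x n := by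
        unfold phiF; rw [← hpos, g_pos' x n hi]; simp
      rw [hv, hv2, hi.1, C_p h, if_pos (Finset.mem_union_right _ (mfun_good h hx hi).1)]
    · have hv2 : phiF B p K M x (i+1) = x (n+1) := by
        unfold phiF; rw [← hpos, g_pos_succ x hi]; simp
      rw [hv, hv2]
      by_cases hxp : x n = p
      · have hK : x (n+1) ∈ K := by
          by_contra hc; exact hi ⟨hxp, hc⟩
        rw [hxp, C_p h, if_pos (Finset.mem_union_left _ hK)]
      · rw [C_ne h hxp]; exact hx n
  · have hv : phiF B p K M x i = mfunF B p M x n := by unfold phiF; rw [hg]; simp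
    have hv2 : phiF B p K M x (i+1) = x (n+1) := by
      unfold phiF
      have : gF B p K x (i+1) = (n+1, false) := by rw [gF, hg]; simp
      rw [this]; simp
    obtain ⟨hmM, hm1, hmp⟩ := mfun_good h hx hi
    rw [hv, hv2, C_ne h hmp]; exact hm1

lemma psi_path (h : IsPrimitiveTransfer B C p K M) {y : ℕ → V} (hy : IsPath C y) :
    IsPath B (psiF p M y) := by
  intro n
  unfold psiF
  set e := eF p M y n with he
  rw [e_succ, ← he]
  by_cases hd : delP p M y e
  · rw [if_pos hd]
    have hmp : y (e+1) ≠ p := fun hc => h.p_not_mem_M (hc ▸ hd.2)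
    have hB : B (y (e+1)) (y (e+2)) = 1 := by
      have := hy (e+1)
      rwa [C_ne h hmp] at this
    have hsum : 1 ≤ ∑ m ∈ M, B m (y (e+2)) := by
      calc 1 = B (y (e+1)) (y (e+2)) := hB.symm
      _ ≤ _ := Finset.single_le_sum (f := fun m => B m (y (e+2)))
          (fun i _ => Nat.zero_le _) hd.2
    have h2 := h.row_eq (y (e+2))
    have hBp : B p (y (e+2)) = 1 := by
      rcases h.zeroOne p (y (e+2)) with h0 | h0
      · exfalso; rw [h0] at h2; split at h2 <;> omega
      · exact h0
    rw [hd.1]; exact hBp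
  · rw [if_neg hd]
    by_cases hyp : y e = p
    · have h1 := hy e
      rw [hyp, C_p h] at h1
      have hKM : y (e+1) ∈ K ∪ M := by by_contra hc; rw [if_neg hc] at h1; omega
      have hK : y (e+1) ∈ K := by
        rcases Finset.mem_union.1 hKM with hK | hM
        · exact hK
        · exact absurd ⟨hyp, hM⟩ hd
      have h2 := h.row_eq (y (e+1))
      rw [if_pos hK] at h2
      rcases h.zeroOne p (y (e+1)) with h0 | h0 <;> rw [h0] at h2
      · omega
      · rw [hyp, h0]
    · rw [show e + (1:ℕ) = e + 1 by rfl]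
      have := hy e
      rwa [C_ne h hyp] at this

lemma e_phi (h : IsPrimitiveTransfer B C p K M) {x : ℕ → V} (hx : IsPath B x) (n : ℕ) :
    eF p M (phiF B p K M x) n = posF B p K x n := by
  induction n with
  | zero => rfl
  | succ n ih =>
    rw [e_succ, ih, pos_succ]
    congr 1
    by_cases hi : insP B p K x n
    · rw [if_pos hi, if_pos]
      exact ⟨by rw [phi_at_pos, hi.1], by rw [phi_at_pos' x n hi]; exact (mfun_good h hx hi).1⟩
    · rw [if_neg hi, if_neg]
      intro hd
      by_cases hxp : x n = p
      · have hK : x (n+1) ∈ K := by by_contra hc; exact hi ⟨hxp, hc⟩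
        have hv2 : phiF B p K M x (posF B p K x n + 1) = x (n+1) := by
          unfold phiF; rw [g_pos_succ x hi]; simp
        have hd2 := hd.2
        rw [hv2] at hd2
        exact Finset.disjoint_left.1 h.disjKM hK hd2
      · have hd1 := hd.1
        rw [phi_at_pos] at hd1; exact hxp hd1

lemma psi_phi (h : IsPrimitiveTransfer B C p K M) {x : ℕ → V} (hx : IsPath B x) :
    psiF p M (phiF B p K M x) = x := by
  funext n
  rw [psiF, e_phi h hx, phi_at_pos]

lemma ins_iff_del (h : IsPrimitiveTransfer B C p K M) {y : ℕ → V} (hy : IsPath C y) (n : ℕ) :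
    insP B p K (psiF p M y) n ↔ delP p M y (eF p M y n) := by
  set e := eF p M y n with he
  have hx0 : psiF p M y n = y e := rfl
  constructor
  · intro hi
    by_contra hd
    have hstep : eF p M y (n+1) = e + 1 := by rw [e_succ, ← he, if_neg hd]
    have hx1 : psiF p M y (n+1) = y (e+1) := by rw [psiF, hstep]
    have hyp : y e = p := by rw [← hx0]; exact hi.1
    have h1 := hy e
    rw [hyp, C_p h] at h1
    have hKM : y (e+1) ∈ K ∪ M := by by_contra hc; rw [if_neg hc] at h1; omega
    rcases Finset.mem_union.1 hKM with hK | hM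
    · exact hi.2 (by rw [hx1]; exact hK)
    · exact hd ⟨hyp, hM⟩
  · intro hd
    have hstep : eF p M y (n+1) = e + 2 := by rw [e_succ, ← he, if_pos hd]
    have hx1 : psiF p M y (n+1) = y (e+2) := by rw [psiF, hstep]
    refine ⟨by rw [hx0]; exact hd.1, ?_⟩
    rw [hx1]
    intro hK
    have hmp : y (e+1) ≠ p := fun hc => h.p_not_mem_M (hc ▸ hd.2)
    have hB : B (y (e+1)) (y (e+2)) = 1 := by
      have := hy (e+1); rwa [C_ne h hmp] at this
    have hsum : 1 ≤ ∑ m ∈ M, B m (y (e+2)) :=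
      hB ▸ Finset.single_le_sum (f := fun m => B m (y (e+2))) (fun i _ => Nat.zero_le _) hd.2
    have h2 := h.row_eq (y (e+2))
    rw [if_pos hK] at h2
    rcases h.zeroOne p (y (e+2)) with h0 | h0 <;> omega

lemma pos_psi (h : IsPrimitiveTransfer B C p K M) {y : ℕ → V} (hy : IsPath C y) (n : ℕ) :
    posF B p K (psiF p M y) n = eF p M y n := by
  induction n with
  | zero => rfl
  | succ n ih =>
    rw [pos_succ, e_succ, ih]
    congr 1
    by_cases hd : delP p M y (eF p M y n)
    · rw [if_pos hd, if_pos ((ins_iff_del h hy n).2 hd)]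
    · rw [if_neg hd, if_neg (fun hi => hd ((ins_iff_del h hy n).1 hi))]

lemma phi_psi (h : IsPrimitiveTransfer B C p K M) {y : ℕ → V} (hy : IsPath C y) :
    phiF B p K M (psiF p M y) = y := by
  funext i
  set x := psiF p M y with hxdef
  obtain ⟨n, ⟨hg, hpos⟩ | ⟨hg, hi, hpos⟩⟩ := g_spec (B := B) (p := p) (K := K) x i
  · have hv : phiF B p K M x i = x n := by unfold phiF; rw [hg]; simp
    rw [hv, ← hpos, pos_psi h hy]; rfl
  · have hv : phiF B p K M x i = mfunF B p M x n := by unfold phiF; rw [hg]; simp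
    have hd : delP p M y (eF p M y n) := (ins_iff_del h hy n).1 hi
    set e := eF p M y n with he
    have hstep : eF p M y (n+1) = e + 2 := by rw [e_succ, ← he, if_pos hd]
    have hx1 : x (n+1) = y (e+2) := by rw [hxdef, psiF, hstep]
    have hmp : y (e+1) ≠ p := fun hc => h.p_not_mem_M (hc ▸ hd.2)
    have hB : B (y (e+1)) (y (e+2)) ≠ 0 := by
      have := hy (e+1); rw [C_ne h hmp, show e+1+1 = e+2 from rfl] at this; omega
    have hm : mfunF B p M x n = y (e+1) := mfun_eq h hd.2 (by rw [hx1]; exact hB)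
    rw [hv, hm, ← hpos, pos_psi h hy, ← he]

lemma insP_congr {x y : ℕ → V} {n m : ℕ} (h1 : x n = y m) (h2 : x (n+1) = y (m+1)) :
    insP B p K x n ↔ insP B p K y m := by unfold insP; rw [h1, h2]

lemma mfun_congr {x y : ℕ → V} {n m : ℕ} (h2 : x (n+1) = y (m+1)) :
    mfunF B p M x n = mfunF B p M y m := by unfold mfunF; rw [h2]

lemma tail_pos {x y : ℕ → V} {k : ℤ} {N : ℕ} (hNk : (N : ℤ) ≥ k)
    (hag : ∀ n ≥ N, x n = y (((n : ℤ) - k).toNat)) :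
    ∀ n ≥ N, (posF B p K x n : ℤ) - (posF B p K y (((n : ℤ) - k).toNat) : ℤ)
      = (posF B p K x N : ℤ) - (posF B p K y (((N : ℤ) - k).toNat) : ℤ) := by
  intro n hn
  induction n, hn using Nat.le_induction with
  | base => rfl
  | succ n hn ih =>
    set m := (((n : ℕ) : ℤ) - k).toNat with hm
    have hmz : (m : ℤ) = (n : ℤ) - k := by omega
    have hm1 : ((((n+1 : ℕ)) : ℤ) - k).toNat = m + 1 := by omega
    have h1 : x n = y m := hag n hn
    have h2 : x (n+1) = y (m+1) := by
      have := hag (n+1) (by omega); rwa [hm1] at this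
    rw [hm1, pos_succ, pos_succ, ← ih]
    by_cases hi : insP B p K x n
    · rw [if_pos hi, if_pos ((insP_congr h1 h2).1 hi)]; push_cast; ring
    · rw [if_neg hi, if_neg (fun hc => hi ((insP_congr h1 h2).2 hc))]; push_cast; ring

lemma lamW_unique {x y : ℕ → V} {k d d' : ℤ} (hd : LamW B p K x k y d)
    (hd' : LamW B p K x k y d') : d = d' := by
  obtain ⟨N, _, hN⟩ := hd
  obtain ⟨N', _, hN'⟩ := hd'
  have h1 := hN (max N N') (le_max_left _ _)
  have h2 := hN' (max N N') (le_max_right _ _)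
  omega

lemma lam_spec {x y : ℕ → V} {k d : ℤ} (hd : LamW B p K x k y d) :
    lamF B p K x k y = d := by
  rw [lamF, dif_pos ⟨d, hd⟩]
  exact lamW_unique (Exists.choose_spec (⟨d, hd⟩ : ∃ d, LamW B p K x k y d)) hd

lemma lamW_lamF {x y : ℕ → V} {k : ℤ} (hs : SEquiv x k y) :
    LamW B p K x k y (lamF B p K x k y) := by
  obtain ⟨N, hNk, hag⟩ := hs
  have hW : LamW B p K x k y
      ((posF B p K x N : ℤ) - (posF B p K y (((N : ℤ) - k).toNat) : ℤ)) :=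
    ⟨N, hNk, tail_pos hNk hag⟩
  rw [lam_spec hW]
  exact hW

lemma lamW_inj {x y : ℕ → V} {k k' d : ℤ} (hd : LamW B p K x k y d)
    (hd' : LamW B p K x k' y d) : k = k' := by
  obtain ⟨N, hNk, hN⟩ := hd
  obtain ⟨N', hNk', hN'⟩ := hd'
  have h1 := hN (max N N') (le_max_left _ _)
  have h2 := hN' (max N N') (le_max_right _ _)
  set n := max N N'
  have hnN : N ≤ n := le_max_left _ _
  have hnN' : N' ≤ n := le_max_right _ _
  have he : posF B p K y (((n : ℤ) - k).toNat) = posF B p K y (((n : ℤ) - k').toNat) := by omega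
  have := (pos_strictMono (B := B) (p := p) (K := K) y).injective he
  omega

lemma lamW_comp {x y z : ℕ → V} {k l d1 d2 : ℤ} (hd1 : LamW B p K x k y d1)
    (hd2 : LamW B p K y l z d2) : LamW B p K x (k + l) z (d1 + d2) := by
  obtain ⟨N1, hN1, h1⟩ := hd1
  obtain ⟨N2, hN2, h2⟩ := hd2
  refine ⟨max N1 ((N2 : ℤ) + k).toNat, ?_, ?_⟩
  · have := Int.self_le_toNat ((N2 : ℤ) + k)
    have : (((N2 : ℤ) + k).toNat : ℤ) ≤ max N1 ((N2 : ℤ) + k).toNat := by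
      exact_mod_cast Nat.cast_le.2 (le_max_right _ _)
    omega
  · intro n hn
    have hnN1 : N1 ≤ n := le_trans (le_max_left _ _) hn
    have hnN2 : (((N2 : ℤ) + k).toNat) ≤ n := le_trans (le_max_right _ _) hn
    have hmN2 : N2 ≤ (((n : ℕ) : ℤ) - k).toNat := by omega
    have e1 := h1 n hnN1
    have e2 := h2 ((((n : ℕ) : ℤ) - k).toNat) hmN2
    have hmm : ((((((n : ℕ) : ℤ) - k).toNat : ℕ) : ℤ) - l).toNat
        = (((n : ℕ) : ℤ) - (k + l)).toNat := by omega
    rw [hmm] at e2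
    omega

lemma sequiv_phi {x y : ℕ → V} {k D : ℤ} (hs : SEquiv x k y)
    (hl : LamW B p K x k y D) : SEquiv (phiF B p K M x) D (phiF B p K M y) := by
  obtain ⟨N0, hN0k, hag⟩ := hs
  obtain ⟨N1, hN1k, hpos⟩ := hl
  set N : ℕ := max N0 N1 with hN
  have hNk : (N : ℤ) ≥ k := le_trans hN0k (by exact_mod_cast le_max_left N0 N1)
  refine ⟨posF B p K x N, ?_, ?_⟩
  · have := hpos N (le_max_right _ _)
    have : (0 : ℤ) ≤ posF B p K y (((N : ℤ) - k).toNat) := by positivity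
    omega
  · intro i hi
    obtain ⟨n, hcase⟩ := g_spec (B := B) (p := p) (K := K) x i
    have hnN : N ≤ n := by
      by_contra hc
      push_neg at hc
      have hmono : posF B p K x (n+1) ≤ posF B p K x N :=
        (pos_strictMono (B := B) (p := p) (K := K) x).monotone (by omega)
      rcases hcase with ⟨_, hpos'⟩ | ⟨_, hins, hpos'⟩
      · have := pos_lt (B := B) (p := p) (K := K) x n; omega
      · have : posF B p K x (n+1) = posF B p K x n + 2 := by rw [pos_succ, if_pos hins]
        omega
    set m := (((n : ℕ) : ℤ) - k).toNat with hm
    have hmz : (m : ℤ) = (n : ℤ) - k := by omega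
    have hm1 : ((((n+1 : ℕ)) : ℤ) - k).toNat = m + 1 := by omega
    have h1 : x n = y m := hag n (le_trans (le_max_left _ _) hnN)
    have h2 : x (n+1) = y (m+1) := by
      have := hag (n+1) (by have := le_trans (le_max_left N0 N1) hnN; omega)
      rwa [hm1] at this
    have hd : (posF B p K x n : ℤ) - (posF B p K y m : ℤ) = D := by
      have := hpos n (le_trans (le_max_right _ _) hnN)
      rwa [← hm] at this
    rcases hcase with ⟨hg, hpos'⟩ | ⟨hg, hins, hpos'⟩
    · have htn : ((i : ℤ) - D).toNat = posF B p K y m := by omega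
      rw [htn, ← hpos', phi_at_pos, phi_at_pos]
      exact h1
    · have htn : ((i : ℤ) - D).toNat = posF B p K y m + 1 := by omega
      rw [htn, ← hpos', phi_at_pos' x n hins,
        phi_at_pos' y m ((insP_congr h1 h2).1 hins)]
      exact mfun_congr h2

lemma e_succ_kept (h : IsPrimitiveTransfer B C p K M) (y : ℕ → V) (n : ℕ) :
    ¬ (y (eF p M y (n+1) - 1) = p ∧ y (eF p M y (n+1)) ∈ M) := by
  by_cases hd : delP p M y (eF p M y n)
  · have hstep : eF p M y (n+1) = eF p M y n + 2 := by rw [e_succ, if_pos hd]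
    rw [hstep, show eF p M y n + 2 - 1 = eF p M y n + 1 from rfl]
    intro hc
    exact h.p_not_mem_M (hc.1 ▸ hd.2)
  · have hstep : eF p M y (n+1) = eF p M y n + 1 := by rw [e_succ, if_neg hd]
    rw [hstep, show eF p M y n + 1 - 1 = eF p M y n from rfl]
    exact hd

lemma exists_between (y : ℕ → V) (j : ℕ) :
    ∃ n, eF p M y n ≤ j ∧ j < eF p M y (n+1) := by
  induction j with
  | zero => exact ⟨0, Nat.le_refl _, e_lt y 0⟩
  | succ j ih =>
    obtain ⟨n, h1, h2⟩ := ih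
    by_cases hc : j + 1 < eF p M y (n+1)
    · exact ⟨n, by omega, hc⟩
    · exact ⟨n+1, by omega, by have := e_lt (p := p) (M := M) y (n+1); omega⟩

lemma mem_range_e (h : IsPrimitiveTransfer B C p K M) (y : ℕ → V) (j : ℕ)
    (hj : j = 0 ∨ ¬ (y (j-1) = p ∧ y j ∈ M)) : ∃ n, eF p M y n = j := by
  obtain ⟨n, h1, h2⟩ := exists_between (p := p) (M := M) y j
  by_cases hc : eF p M y n = j
  · exact ⟨n, hc⟩
  · exfalso
    by_cases hd : delP p M y (eF p M y n)
    · have hstep : eF p M y (n+1) = eF p M y n + 2 := by rw [e_succ, if_pos hd]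
      have hje : j = eF p M y n + 1 := by omega
      rcases hj with hj | hj
      · omega
      · exact hj ⟨by rw [hje, show eF p M y n + 1 - 1 = eF p M y n from rfl]; exact hd.1,
          by rw [hje]; exact hd.2⟩
    · have hstep : eF p M y (n+1) = eF p M y n + 1 := by rw [e_succ, if_neg hd]
      omega

lemma surj_grpd (h : IsPrimitiveTransfer B C p K M) {u w : ℕ → V} {κ : ℤ}
    (hu : IsPath C u) (hw : IsPath C w) (hs : SEquiv u κ w) :
    ∃ k, SEquiv (psiF p M u) k (psiF p M w) ∧ LamW B p K (psiF p M u) k (psiF p M w) κ := by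
  obtain ⟨N0, hN0k, hag⟩ := hs
  set n1 : ℕ := N0 + 1 with hn1
  have heu : N0 + 1 ≤ eF p M u n1 := le_trans (by omega) (e_ge u n1)
  -- the index j1 in w corresponding to eF u n1
  have hj1ex : ∃ j1 : ℕ, (j1 : ℤ) = (eF p M u n1 : ℤ) - κ :=
    ⟨((eF p M u n1 : ℤ) - κ).toNat, by omega⟩
  obtain ⟨j1, hj1⟩ := hj1ex
  have hj1pos : 1 ≤ j1 := by omega
  -- value agreement around eF u n1
  have hv1 : u (eF p M u n1 - 1) = w (j1 - 1) := by
    have := hag (eF p M u n1 - 1) (by omega)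
    have ht : ((((eF p M u n1 - 1 : ℕ)) : ℤ) - κ).toNat = j1 - 1 := by omega
    rwa [ht] at this
  have hv2 : u (eF p M u n1) = w j1 := by
    have := hag (eF p M u n1) (by omega)
    have ht : (((eF p M u n1 : ℕ) : ℤ) - κ).toNat = j1 := by omega
    rwa [ht] at this
  have hkept : ¬ (w (j1 - 1) = p ∧ w j1 ∈ M) := by
    have := e_succ_kept h u N0
    rw [← hn1] at this
    rw [← hv1, ← hv2]
    exact this
  obtain ⟨m1, hm1⟩ := mem_range_e h w j1 (Or.inr hkept)
  -- main induction
  have main : ∀ d, (eF p M u (n1 + d) : ℤ) - κ = (eF p M w (m1 + d) : ℤ) := by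
    intro d
    induction d with
    | zero => rw [Nat.add_zero, Nat.add_zero, hm1]; omega
    | succ d ih =>
      have ha : N0 ≤ eF p M u (n1 + d) := le_trans (by omega) (e_ge u (n1 + d))
      have hva : u (eF p M u (n1 + d)) = w (eF p M w (m1 + d)) := by
        have := hag (eF p M u (n1 + d)) ha
        have ht : (((eF p M u (n1 + d) : ℕ) : ℤ) - κ).toNat = eF p M w (m1 + d) := by omega
        rwa [ht] at this
      have hva1 : u (eF p M u (n1 + d) + 1) = w (eF p M w (m1 + d) + 1) := by
        have := hag (eF p M u (n1 + d) + 1) (by omega)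
        have ht : ((((eF p M u (n1 + d) + 1 : ℕ)) : ℤ) - κ).toNat
            = eF p M w (m1 + d) + 1 := by omega
        rwa [ht] at this
      have hdel : delP p M u (eF p M u (n1 + d)) ↔ delP p M w (eF p M w (m1 + d)) := by
        unfold delP; rw [hva, hva1]
      have e1 : eF p M u (n1 + (d+1)) = eF p M u (n1 + d) +
          (if delP p M u (eF p M u (n1 + d)) then 2 else 1) := by
        rw [show n1 + (d+1) = (n1 + d) + 1 from rfl, e_succ]
      have e2 : eF p M w (m1 + (d+1)) = eF p M w (m1 + d) +
          (if delP p M w (eF p M w (m1 + d)) then 2 else 1) := by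
        rw [show m1 + (d+1) = (m1 + d) + 1 from rfl, e_succ]
      rw [e1, e2]
      by_cases hd2 : delP p M u (eF p M u (n1 + d))
      · rw [if_pos hd2, if_pos (hdel.1 hd2)]; push_cast; omega
      · rw [if_neg hd2, if_neg (fun hc => hd2 (hdel.2 hc))]; push_cast; omega
  refine ⟨(n1 : ℤ) - (m1 : ℤ), ⟨n1, by omega, ?_⟩, ⟨n1, by omega, ?_⟩⟩
  · intro n hn
    obtain ⟨d, rfl⟩ : ∃ d, n = n1 + d := ⟨n - n1, by omega⟩
    have ht : ((((n1 + d : ℕ)) : ℤ) - ((n1 : ℤ) - (m1 : ℤ))).toNat = m1 + d := by omega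
    rw [ht]
    unfold psiF
    have := main d
    have ha : N0 ≤ eF p M u (n1 + d) := le_trans (by omega) (e_ge u (n1 + d))
    have := hag (eF p M u (n1 + d)) ha
    have ht2 : (((eF p M u (n1 + d) : ℕ) : ℤ) - κ).toNat = eF p M w (m1 + d) := by
      have := main d; omega
    rwa [ht2] at this
  · intro n hn
    obtain ⟨d, rfl⟩ : ∃ d, n = n1 + d := ⟨n - n1, by omega⟩
    have ht : ((((n1 + d : ℕ)) : ℤ) - ((n1 : ℤ) - (m1 : ℤ))).toNat = m1 + d := by omega
    rw [ht, pos_psi h hu, pos_psi h hw]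
    have := main d
    omega
end lemmas
end PT

theorem stmt_3 {V : Type*} [DecidableEq V] (B C : V → V → ℕ) (p : V) (K M : Finset V)
    (hrf : RowFinite B) (h : IsPrimitiveTransfer B C p K M) :
    ∃ (φ : (ℕ → V) → (ℕ → V)) (lam : (ℕ → V) → ℤ → (ℕ → V) → ℤ),
      Set.BijOn φ {x | IsPath B x} {y | IsPath C y} ∧
      Set.BijOn (fun t : (ℕ → V) × ℤ × (ℕ → V) => (φ t.1, lam t.1 t.2.1 t.2.2, φ t.2.2))
        (Grpd B) (Grpd C) ∧
      ∀ x k y l z, (x, k, y) ∈ Grpd B → (y, l, z) ∈ Grpd B →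
        lam x k y + lam y l z = lam x (k + l) z := by
  classical
  refine ⟨PT.phiF B p K M, PT.lamF B p K, ⟨?_, ?_, ?_⟩, ⟨?_, ?_, ?_⟩, ?_⟩
  · intro x hx
    exact PT.phi_path h hx
  · intro x hx x' hx' he
    rw [← PT.psi_phi h hx, ← PT.psi_phi h hx', he]
  · intro y hy
    exact ⟨PT.psiF p M y, PT.psi_path h hy, PT.phi_psi h hy⟩
  · rintro ⟨x, k, y⟩ ⟨hx, hy, hs⟩
    exact ⟨PT.phi_path h hx, PT.phi_path h hy, PT.sequiv_phi hs (PT.lamW_lamF hs)⟩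
  · rintro ⟨x, k, y⟩ ⟨hx, hy, hs⟩ ⟨x', k', y'⟩ ⟨hx', hy', hs'⟩ he
    simp only [Prod.mk.injEq] at he
    obtain ⟨he1, he2, he3⟩ := he
    have hxx : x = x' := by rw [← PT.psi_phi (x := x) h hx, ← PT.psi_phi (x := x') h hx', he1]
    have hyy : y = y' := by rw [← PT.psi_phi (x := y) h hy, ← PT.psi_phi (x := y') h hy', he3]
    subst hxx
    subst hyy
    have hW' := PT.lamW_lamF (B := B) (p := p) (K := K) hs'
    rw [← he2] at hW'
    have hk : k = k' := PT.lamW_inj (PT.lamW_lamF hs) hW'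
    subst hk
    rfl
  · rintro ⟨u, κ, w⟩ ⟨hu, hw, hs⟩
    obtain ⟨k, hsk, hW⟩ := PT.surj_grpd h hu hw hs
    refine ⟨(PT.psiF p M u, k, PT.psiF p M w),
      ⟨PT.psi_path h hu, PT.psi_path h hw, hsk⟩, ?_⟩
    simp only
    rw [PT.phi_psi h hu, PT.phi_psi h hw, PT.lam_spec hW]
  · intro x k y l z hm hm'
    obtain ⟨hx, hy, hs⟩ := hm
    obtain ⟨hy', hz, hs'⟩ := hm'
    exact (PT.lam_spec (PT.lamW_comp (PT.lamW_lamF hs) (PT.lamW_lamF hs'))).symm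
end

section
/- Let B be a row-finite 0-1 matrix on V with sink set S = {v ∈ V : row B v is zero}, and let C be the primitive transfer of B at p with data (K, M) (so K, M ⊆ V). Then the sink set of C equals S, and the matrix C̃ is the primitive transfer of B̃ at inl p with data (inl '' K, inl '' M); in particular the primitive-transfer hypotheses hold for B̃: the rows B̃ (inl p) and B̃ (inl m) (m ∈ M) are nonzero and B̃ (inl p) w = (if w ∈ inl '' K then 1 else 0) + ∑_{m ∈ M} B̃ (inl m) w for every index w of B̃. -/
/-- The sink set of `B`: the vertices whose row is zero. -/
def sinkSet {V : Type*} (B : V → V → ℕ) : Set V := {v | ∀ j, B v j = 0}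

/-- The matrix `B̃` obtained by adding a distinct infinite tail at each vertex of `S`
(intended to be the sink set of `B`): it is indexed by `V ⊕ (S × ℕ)`, with
`B̃ (inl v) (inl w) = B v w`, `B̃ (inl v) (inr (v, 0)) = 1`,
`B̃ (inr (v, n)) (inr (v, n+1)) = 1`, and all other entries `0`. -/
def tilde {V : Type*} [DecidableEq V] (B : V → V → ℕ) (S : Set V) :
    (V ⊕ ({v : V // v ∈ S} × ℕ)) → (V ⊕ ({v : V // v ∈ S} × ℕ)) → ℕ
  | Sum.inl v, Sum.inl w => B v w
  | Sum.inl v, Sum.inr (s, n) => if s.1 = v ∧ n = 0 then 1 else 0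
  | Sum.inr (s, n), Sum.inr (t, m) => if s = t ∧ m = n + 1 then 1 else 0
  | Sum.inr _, Sum.inl _ => 0

theorem stmt_4 {V : Type*} [DecidableEq V] (B C : V → V → ℕ) (p : V) (K M : Finset V)
    (hrf : RowFinite B) (h : IsPrimitiveTransfer B C p K M) :
    sinkSet C = sinkSet B ∧
    IsPrimitiveTransfer (tilde B (sinkSet B)) (tilde C (sinkSet B))
      (Sum.inl p) (K.image Sum.inl) (M.image Sum.inl) := by
  obtain ⟨hz, hdisj, hpM, hp0, hm0, hrow, htr⟩ := h
  have hpns : p ∉ sinkSet B := by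
    intro hs
    obtain ⟨j, hj⟩ := hp0
    exact hj (hs j)
  have hmns : ∀ m ∈ M, m ∉ sinkSet B := by
    intro m hm hs
    obtain ⟨j, hj⟩ := hm0 m hm
    exact hj (hs j)
  -- row of C at p is nonzero
  have hCp : ∃ j, C p j ≠ 0 := by
    obtain ⟨j, hj⟩ := hp0
    have := hrow j
    by_cases hK : j ∈ K
    · exact ⟨j, by rw [htr]; simp [hK]⟩
    · have hsum : ∑ m ∈ M, B m j ≠ 0 := by
        intro h0; apply hj; rw [this, h0]; simp [hK]
      obtain ⟨m, hm, hmj⟩ := Finset.exists_ne_zero_of_sum_ne_zero hsum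
      have hmM : m ∈ M := hm
      have : B m m ≠ 0 ∨ True := Or.inr trivial
      -- row of B m is nonzero; but we need a nonzero entry of C p, use j ∈ K ∪ M? No.
      refine ⟨m, ?_⟩
      rw [htr]
      simp [Finset.mem_union, hmM]
  have hsink : sinkSet C = sinkSet B := by
    ext v
    by_cases hv : v = p
    · subst hv
      constructor
      · intro hs; obtain ⟨j, hj⟩ := hCp; exact absurd (hs j) hj
      · intro hs; exact absurd hs hpns
    · constructor <;> intro hs j <;> have := hs j
      · rw [htr v j, if_neg hv] at this; exact this
      · rw [htr v j, if_neg hv]; exact this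
  refine ⟨hsink, ?_, ?_, ?_, ?_, ?_, ?_, ?_⟩
  · rintro (v | ⟨s, n⟩) (w | ⟨t, m⟩) <;> simp only [tilde]
    · exact hz v w
    · split <;> simp
    · simp
    · split <;> simp
  · rw [Finset.disjoint_left]
    rintro x hK hM
    simp only [Finset.mem_image] at hK hM
    obtain ⟨a, ha, rfl⟩ := hK
    obtain ⟨b, hb, hab⟩ := hM
    cases Sum.inl.inj hab
    exact (Finset.disjoint_left.mp hdisj ha) hb
  · simp only [Finset.mem_image]
    rintro ⟨m, hm, hmp⟩
    cases Sum.inl.inj hmp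
    exact hpM hm
  · obtain ⟨j, hj⟩ := hp0
    exact ⟨Sum.inl j, hj⟩
  · rintro x hx
    simp only [Finset.mem_image] at hx
    obtain ⟨m, hm, rfl⟩ := hx
    obtain ⟨j, hj⟩ := hm0 m hm
    exact ⟨Sum.inl j, hj⟩
  · have hsum : ∀ w : V ⊕ ({v : V // v ∈ sinkSet B} × ℕ),
        ∑ m ∈ M.image Sum.inl, tilde B (sinkSet B) m w
          = ∑ m ∈ M, tilde B (sinkSet B) (Sum.inl m) w := by
      intro w
      exact Finset.sum_image (g := (Sum.inl : V → V ⊕ ({v : V // v ∈ sinkSet B} × ℕ)))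
        (s := M) (f := fun x => tilde B (sinkSet B) x w)
        (fun x _ y _ hxy => Sum.inl.inj hxy)
    rintro (w | ⟨s, n⟩)
    · rw [hsum]
      simp only [tilde]
      have : ((Sum.inl w : V ⊕ ({v : V // v ∈ sinkSet B} × ℕ)) ∈ K.image Sum.inl) ↔ (w ∈ K) := by simp
      rw [if_congr this rfl rfl]
      exact hrow w
    · rw [hsum]
      simp only [tilde]
      have hsp : ¬(s.1 = p ∧ n = 0) := fun ⟨h1, _⟩ => hpns (h1 ▸ s.2)
      rw [if_neg hsp]
      have h1 : (Sum.inr (s, n) : V ⊕ ({v : V // v ∈ sinkSet B} × ℕ)) ∉ K.image Sum.inl := by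
        simp
      rw [if_neg h1]
      symm
      simp only [zero_add]
      apply Finset.sum_eq_zero
      intro m hm
      exact if_neg (fun ⟨h1, _⟩ => hmns m hm (h1 ▸ s.2))
  · rintro (v | ⟨s, n⟩) (w | ⟨t, m⟩)
    · by_cases hv : v = p
      · subst hv
        simp only [tilde, if_pos rfl]
        rw [htr v w, if_pos rfl]
        have hmem : ((Sum.inl w : V ⊕ ({v : V // v ∈ sinkSet B} × ℕ)) ∈ K.image Sum.inl ∪ M.image Sum.inl) ↔ w ∈ K ∪ M := by simp
        rw [if_congr hmem rfl rfl]
        simp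
      · have : (Sum.inl v : V ⊕ ({v : V // v ∈ sinkSet B} × ℕ)) ≠ Sum.inl p := by
          simp [hv]
        simp only [tilde, if_neg this]
        rw [htr v w, if_neg hv]
    · by_cases hv : v = p
      · subst hv
        simp only [tilde, if_pos rfl]
        have hsp : ¬(t.1 = v ∧ m = 0) := fun ⟨h1, _⟩ => hpns (h1 ▸ t.2)
        rw [if_neg hsp]
        have : (Sum.inr (t, m) : V ⊕ ({v : V // v ∈ sinkSet B} × ℕ)) ∉
            K.image Sum.inl ∪ M.image Sum.inl := by simp
        rw [if_neg this]
        simp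
      · have : (Sum.inl v : V ⊕ ({v : V // v ∈ sinkSet B} × ℕ)) ≠ Sum.inl p := by
          simp [hv]
        simp only [tilde, if_neg this]
    · simp [tilde]
    · simp [tilde]
end

section
/- Let A : Matrix (Fin 4) (Fin 4) ℤ be the matrix with rows (1,1,1,1), (1,0,1,1), (1,1,0,1), (1,1,1,0). Let H be the subgroup of the additive group Fin 4 → ℤ generated by the four elements rᵢ (i : Fin 4) defined by rᵢ j = (if i = j then 1 else 0) − A i j. Then there is an additive group isomorphism ψ from (Fin 4 → ℤ) ⧸ H onto ZMod 2 × ZMod 6 sending the class of the standard basis vector e₀ to (0,2), of e₁ to (0,1), of e₂ to (1,4), and of e₃ to (1,1); consequently the class of e₀+e₁+e₂+e₃ is sent to (0,2). -/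
/-- The matrix `A` with rows `(1,1,1,1), (1,0,1,1), (1,1,0,1), (1,1,1,0)`. -/
def A : Matrix (Fin 4) (Fin 4) ℤ := !![1,1,1,1; 1,0,1,1; 1,1,0,1; 1,1,1,0]

/-- The generators `rᵢ j = (if i = j then 1 else 0) − A i j` of the relation subgroup. -/
def r (i : Fin 4) : Fin 4 → ℤ := fun j => (if i = j then 1 else 0) - A i j

/-- The subgroup of `Fin 4 → ℤ` generated by the `rᵢ`. -/
def H : AddSubgroup (Fin 4 → ℤ) := AddSubgroup.closure (Set.range r)

/-- The standard basis vector `eᵢ`. -/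
def e (i : Fin 4) : Fin 4 → ℤ := Pi.single i 1

namespace Stmt5Aux

def v : Fin 4 → ZMod 2 × ZMod 6 := ![(0,2),(0,1),(1,4),(1,1)]

def φ : (Fin 4 → ℤ) →+ ZMod 2 × ZMod 6 where
  toFun x := ∑ i, x i • v i
  map_zero' := by simp
  map_add' x y := by
    simp [add_smul, Finset.sum_add_distrib]

lemma r_mem (i : Fin 4) : r i ∈ H := AddSubgroup.subset_closure ⟨i, rfl⟩

lemma hker : H ≤ φ.ker := by
  rw [H, AddSubgroup.closure_le]
  rintro _ ⟨i, rfl⟩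
  rw [SetLike.mem_coe, AddMonoidHom.mem_ker]
  fin_cases i <;> decide

def φbar : ((Fin 4 → ℤ) ⧸ H) →+ ZMod 2 × ZMod 6 :=
  QuotientAddGroup.lift H φ hker

lemma mem1 : (2 : ℤ) • e 1 - e 0 ∈ H := by
  have : (2 : ℤ) • e 1 - e 0 = -r 0 + r 1 := by decide
  rw [this]; exact H.add_mem (H.neg_mem (r_mem 0)) (r_mem 1)

lemma mem2 : (e 3 + (3 : ℤ) • e 1) - e 2 ∈ H := by
  have : (e 3 + (3 : ℤ) • e 1) - e 2 = -r 0 + r 1 + -r 2 := by decide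
  rw [this]
  exact H.add_mem (H.add_mem (H.neg_mem (r_mem 0)) (r_mem 1)) (H.neg_mem (r_mem 2))

lemma mem3 : (2 : ℤ) • (e 3 - e 1) ∈ H := by
  have : (2 : ℤ) • (e 3 - e 1) = -r 1 + r 3 := by decide
  rw [this]; exact H.add_mem (H.neg_mem (r_mem 1)) (r_mem 3)

lemma mem4 : (6 : ℤ) • e 1 ∈ H := by
  have : (6 : ℤ) • e 1 = (-2 : ℤ) • r 0 + (2 : ℤ) • r 1 + -r 2 + -r 3 := by decide
  rw [this]
  exact H.add_mem (H.add_mem (H.add_mem (H.zsmul_mem (r_mem 0) _)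
    (H.zsmul_mem (r_mem 1) _)) (H.neg_mem (r_mem 2))) (H.neg_mem (r_mem 3))

abbrev Q := (Fin 4 → ℤ) ⧸ H

def g2 : ZMod 2 →+ Q :=
  ZMod.lift 2 ⟨zmultiplesHom Q (QuotientAddGroup.mk (e 3 - e 1)), by
    show ((2 : ℤ) : ℤ) • (QuotientAddGroup.mk (e 3 - e 1) : Q) = 0
    rw [← QuotientAddGroup.mk_zsmul, QuotientAddGroup.eq_zero_iff]
    exact_mod_cast mem3⟩

def g6 : ZMod 6 →+ Q :=
  ZMod.lift 6 ⟨zmultiplesHom Q (QuotientAddGroup.mk (e 1)), by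
    show ((6 : ℤ) : ℤ) • (QuotientAddGroup.mk (e 1) : Q) = 0
    rw [← QuotientAddGroup.mk_zsmul, QuotientAddGroup.eq_zero_iff]
    exact_mod_cast mem4⟩

def inv : ZMod 2 × ZMod 6 →+ Q := AddMonoidHom.coprod g2 g6

lemma g2_int (x : ℤ) : g2 ((x : ℤ) : ZMod 2) = QuotientAddGroup.mk (x • (e 3 - e 1)) := by
  rw [g2, ZMod.lift_coe]
  exact (QuotientAddGroup.mk_zsmul _ _ _).symm

lemma g6_int (x : ℤ) : g6 ((x : ℤ) : ZMod 6) = QuotientAddGroup.mk (x • e 1) := by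
  rw [g6, ZMod.lift_coe]
  exact (QuotientAddGroup.mk_zsmul _ _ _).symm

lemma phi_single (i : Fin 4) : φ (e i) = v i := by
  fin_cases i <;> decide

lemma left_inv : ∀ q : Q, inv (φbar q) = q := by
  have key : (inv.comp φbar).comp (QuotientAddGroup.mk' H) = QuotientAddGroup.mk' H := by
    apply AddMonoidHom.functions_ext
    intro i x
    have hx : (Pi.single i x : Fin 4 → ℤ) = x • e i := by
      funext j; by_cases h : j = i <;> simp [e, h, Pi.single_apply]
    rw [hx, map_zsmul, map_zsmul]
    congr 1
    show inv (φbar (QuotientAddGroup.mk (e i))) = QuotientAddGroup.mk (e i)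
    have : φbar (QuotientAddGroup.mk (e i)) = v i := phi_single i
    rw [this]
    fin_cases i
    · -- v 0 = (0, 2); inv (0,2) = g2 0 + g6 2 = [2 • e 1]
      show g2 0 + g6 2 = QuotientAddGroup.mk (e 0)
      have h0 : (0 : ZMod 2) = ((0 : ℤ) : ZMod 2) := by norm_num
      have h2 : (2 : ZMod 6) = ((2 : ℤ) : ZMod 6) := by norm_num
      rw [h0, h2, g2_int, g6_int]
      simp only [zero_smul, QuotientAddGroup.mk_zero, zero_add]
      rw [QuotientAddGroup.eq]
      have : -((2:ℤ) • e 1) + e 0 = -((2 : ℤ) • e 1 - e 0) := by abel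
      rw [this]
      exact H.neg_mem mem1
    · show g2 0 + g6 1 = QuotientAddGroup.mk (e 1)
      have h0 : (0 : ZMod 2) = ((0 : ℤ) : ZMod 2) := by norm_num
      have h1 : (1 : ZMod 6) = ((1 : ℤ) : ZMod 6) := by norm_num
      rw [h0, h1, g2_int, g6_int]
      simp
    · show g2 1 + g6 4 = QuotientAddGroup.mk (e 2)
      have h1 : (1 : ZMod 2) = ((1 : ℤ) : ZMod 2) := by norm_num
      have h4 : (4 : ZMod 6) = ((4 : ℤ) : ZMod 6) := by norm_num
      rw [h1, h4, g2_int, g6_int, ← QuotientAddGroup.mk_add, QuotientAddGroup.eq]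
      have : -((1:ℤ) • (e 3 - e 1) + (4:ℤ) • e 1) + e 2 = -((e 3 + (3 : ℤ) • e 1) - e 2) := by
        abel
      rw [this]
      exact H.neg_mem mem2
    · show g2 1 + g6 1 = QuotientAddGroup.mk (e 3)
      have h1 : (1 : ZMod 2) = ((1 : ℤ) : ZMod 2) := by norm_num
      have h1' : (1 : ZMod 6) = ((1 : ℤ) : ZMod 6) := by norm_num
      rw [h1, h1', g2_int, g6_int, ← QuotientAddGroup.mk_add]
      congr 1
      abel
  intro q
  induction q using QuotientAddGroup.induction_on with
  | H x => exact DFunLike.congr_fun key x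

lemma right_inv : ∀ z : ZMod 2 × ZMod 6, φbar (inv z) = z := by
  rintro ⟨a, b⟩
  obtain ⟨x, rfl⟩ := ZMod.intCast_surjective a
  obtain ⟨y, rfl⟩ := ZMod.intCast_surjective b
  show φbar (g2 ((x : ℤ) : ZMod 2) + g6 ((y : ℤ) : ZMod 6)) = (((x : ℤ) : ZMod 2), ((y : ℤ) : ZMod 6))
  rw [g2_int, g6_int, map_add]
  show φ (x • (e 3 - e 1)) + φ (y • e 1) = _
  rw [map_zsmul, map_zsmul, map_sub, phi_single, phi_single]
  show x • ((1, 1) - (0, 1) : ZMod 2 × ZMod 6) + y • ((0, 1) : ZMod 2 × ZMod 6) = _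
  ext
  · simp [Prod.smul_def, zsmul_eq_mul]
  · simp [Prod.smul_def, zsmul_eq_mul]

def ψ : Q ≃+ ZMod 2 × ZMod 6 :=
  { φbar with invFun := inv, left_inv := left_inv, right_inv := right_inv }

lemma ψ_single (i : Fin 4) : ψ (QuotientAddGroup.mk (e i)) = v i := phi_single i

end Stmt5Aux

theorem stmt_5 :
    ∃ ψ : ((Fin 4 → ℤ) ⧸ H) ≃+ (ZMod 2 × ZMod 6),
      ψ (QuotientAddGroup.mk (e 0)) = ((0 : ZMod 2), (2 : ZMod 6)) ∧
      ψ (QuotientAddGroup.mk (e 1)) = ((0 : ZMod 2), (1 : ZMod 6)) ∧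
      ψ (QuotientAddGroup.mk (e 2)) = ((1 : ZMod 2), (4 : ZMod 6)) ∧
      ψ (QuotientAddGroup.mk (e 3)) = ((1 : ZMod 2), (1 : ZMod 6)) ∧
      ψ (QuotientAddGroup.mk (e 0 + e 1 + e 2 + e 3)) = ((0 : ZMod 2), (2 : ZMod 6)) := by
  refine ⟨Stmt5Aux.ψ, Stmt5Aux.ψ_single 0, Stmt5Aux.ψ_single 1, Stmt5Aux.ψ_single 2,
    Stmt5Aux.ψ_single 3, ?_⟩
  have h : (QuotientAddGroup.mk (e 0 + e 1 + e 2 + e 3) : (Fin 4 → ℤ) ⧸ H) =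
      QuotientAddGroup.mk (e 0) + QuotientAddGroup.mk (e 1) + QuotientAddGroup.mk (e 2) +
      QuotientAddGroup.mk (e 3) := by
    simp [← QuotientAddGroup.mk_add]
  rw [h, map_add, map_add, map_add, Stmt5Aux.ψ_single 0, Stmt5Aux.ψ_single 1,
    Stmt5Aux.ψ_single 2, Stmt5Aux.ψ_single 3]
  decide
end

section
/- Let B be a row-finite 0-1 matrix on V, let v ∈ V be cofinal (for every infinite path x of B there exist n and a finite B-path from v to x n), and let C be the reverse primitive transfer of B at v with data (K, M). Then the pointed path groupoids 𝒢_{(B,{v})} and 𝒢_{(C,{v})} are algebraically isomorphic: there exist a bijection φ from the infinite paths of B starting at v onto the infinite paths of C starting at v, and a function λ : 𝒢_{(B,{v})} → ℤ, such that (x,k,y) ↦ (φ x, λ(x,k,y), φ y) is a bijection from 𝒢_{(B,{v})} onto 𝒢_{(C,{v})} and λ(x,k,y) + λ(y,l,z) = λ(x,k+l,z) whenever (x,k,y), (y,l,z) ∈ 𝒢_{(B,{v})}. -/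
/-- `C` is the reverse primitive transfer of `B` at `p` with data `(K, M)`:
columns are used in place of rows (`Cᵀ` is the primitive transfer of `Bᵀ` at `p`). -/
structure IsReversePrimitiveTransfer {V : Type*} [DecidableEq V] (B C : V → V → ℕ)
    (p : V) (K M : Finset V) : Prop where
  zeroOne : IsZeroOne B
  disjKM : Disjoint K M
  p_not_mem_M : p ∉ M
  col_p_nonzero : ∃ i, B i p ≠ 0
  col_m_nonzero : ∀ m ∈ M, ∃ i, B i m ≠ 0
  col_eq : ∀ j, B j p = (if j ∈ K then 1 else 0) + ∑ m ∈ M, B j m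
  transfer : ∀ i j, C i j = if j = p then (if i ∈ K ∪ M then 1 else 0) else B i j

/-- `v` is cofinal: every infinite path of `B` can be intercepted by a finite path from `v`. -/
def Cofinal {V : Type*} (B : V → V → ℕ) (v : V) : Prop :=
  ∀ x : ℕ → V, IsPath B x → ∃ (n : ℕ) (l : ℕ) (c : ℕ → V),
    c 0 = v ∧ c l = x n ∧ ∀ i < l, B (c i) (c (i + 1)) = 1

/-- The path groupoid of `B` pointed at `{v}`. -/
def PGrpd {V : Type*} (B : V → V → ℕ) (v : V) : Set ((ℕ → V) × ℤ × (ℕ → V)) :=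
  {t | t ∈ Grpd B ∧ t.1 0 = v ∧ t.2.2 0 = v}

namespace RPT

variable {V : Type*} [DecidableEq V]

/-- insertion happens between positions `n` and `n+1`. -/
abbrev ins (v : V) (K : Finset V) (x : ℕ → V) (n : ℕ) : Prop := x (n+1) = v ∧ x n ∉ K

abbrev del (M : Finset V) (v : V) (y : ℕ → V) (i : ℕ) : Prop := y i ∈ M ∧ y (i+1) = v

noncomputable def mu (B : V → V → ℕ) (M : Finset V) (j : V) : V :=
  if h : ∃ m ∈ M, B j m = 1 then h.choose else j

def f (v : V) (K : Finset V) (x : ℕ → V) : ℕ → ℕ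
  | 0 => 0
  | n+1 => f v K x n + if ins v K x n then 2 else 1

def st (v : V) (K : Finset V) (x : ℕ → V) : ℕ → ℕ × Bool
  | 0 => (0, false)
  | i+1 =>
    let s := st v K x i
    if s.2 then (s.1 + 1, false)
    else if ins v K x s.1 then (s.1, true) else (s.1 + 1, false)

noncomputable def phi (B : V → V → ℕ) (v : V) (K M : Finset V) (x : ℕ → V) (i : ℕ) : V :=
  if (st v K x i).2 then mu B M (x (st v K x i).1) else x ((st v K x i).1)

def r (M : Finset V) (v : V) (y : ℕ → V) : ℕ → ℕ
  | 0 => 0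
  | n+1 => r M v y n + if del M v y (r M v y n + 1) then 2 else 1

def psi (M : Finset V) (v : V) (y : ℕ → V) (n : ℕ) : V := y (r M v y n)

open Classical in
noncomputable def lam (v : V) (K : Finset V) (x : ℕ → V) (k : ℤ) (y : ℕ → V) : ℤ :=
  if h : SEquiv x k y then
    (f v K x h.choose : ℤ) - (f v K y (((h.choose : ℤ) - k).toNat) : ℤ)
  else 0

section Basic
variable (B : V → V → ℕ) (v : V) (K M : Finset V) (x : ℕ → V)

lemma st_f : ∀ n, st v K x (f v K x n) = (n, false) := by
  intro n
  induction n with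
  | zero => simp [st, f]
  | succ n ih =>
    by_cases hi : ins v K x n
    · have h1 : st v K x (f v K x n + 1) = (n, true) := by
        rw [st]; simp [ih, hi]
      have : f v K x (n+1) = f v K x n + 2 := by rw [f]; simp [hi]
      rw [this, show f v K x n + 2 = (f v K x n + 1) + 1 from rfl, st]
      simp [h1]
    · have : f v K x (n+1) = f v K x n + 1 := by rw [f]; simp [hi]
      rw [this, st]; simp [ih, hi]

lemma st_f_ins {n : ℕ} (hi : ins v K x n) : st v K x (f v K x n + 1) = (n, true) := by
  rw [st]; simp [st_f, hi]

lemma phi_f (n : ℕ) : phi B v K M x (f v K x n) = x n := by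
  simp [phi, st_f]

lemma phi_f_ins {n : ℕ} (hi : ins v K x n) :
    phi B v K M x (f v K x n + 1) = mu B M (x n) := by
  simp [phi, st_f_ins v K x hi]

lemma cover : ∀ i, ∃ n, i = f v K x n ∨ (ins v K x n ∧ i = f v K x n + 1) := by
  intro i
  induction i with
  | zero => exact ⟨0, Or.inl rfl⟩
  | succ i ih =>
    obtain ⟨n, hn | ⟨hi, hn⟩⟩ := ih
    · by_cases hins : ins v K x n
      · exact ⟨n, Or.inr ⟨hins, by omega⟩⟩
      · exact ⟨n+1, Or.inl (by rw [f, if_neg hins]; omega)⟩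
    · exact ⟨n+1, Or.inl (by rw [f, if_pos hi]; omega)⟩

lemma f_strictMono : StrictMono (f v K x) := by
  apply strictMono_nat_of_lt_succ
  intro n; rw [f]; split <;> omega

lemma f_le (n : ℕ) : n ≤ f v K x n := by
  induction n with
  | zero => exact Nat.zero_le _
  | succ n ih => rw [f]; split <;> omega

end Basic
end RPT

namespace RPT
variable {V : Type*} [DecidableEq V]

section Matrix
variable {B C : V → V → ℕ} {v : V} {K M : Finset V}

lemma B_le_one (h : IsReversePrimitiveTransfer B C v K M) (i j : V) : B i j ≤ 1 := by
  rcases h.zeroOne i j with h1 | h1 <;> omega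

lemma v_not_M (h : IsReversePrimitiveTransfer B C v K M) : v ∉ M := h.p_not_mem_M

lemma C_eq_B (h : IsReversePrimitiveTransfer B C v K M) {i j : V} (hj : j ≠ v) :
    C i j = B i j := by
  rw [h.transfer, if_neg hj]

lemma C_v (h : IsReversePrimitiveTransfer B C v K M) (i : V) :
    C i v = if i ∈ K ∪ M then 1 else 0 := by
  rw [h.transfer, if_pos rfl]

lemma K_to_v (h : IsReversePrimitiveTransfer B C v K M) {j : V} (hj : j ∈ K) :
    B j v = 1 ∧ ∑ m ∈ M, B j m = 0 := by
  have hce := h.col_eq j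
  rw [if_pos hj] at hce
  have h1 := B_le_one h j v
  omega

lemma Bv_of_mem (h : IsReversePrimitiveTransfer B C v K M) {j m : V} (hm : m ∈ M)
    (hBm : B j m = 1) : B j v = 1 ∧ j ∉ K ∧ ∑ m' ∈ M, B j m' = 1 := by
  have hce := h.col_eq j
  have h1 := B_le_one h j v
  have hle : B j m ≤ ∑ m' ∈ M, B j m' :=
    Finset.single_le_sum (fun i _ => Nat.zero_le _) hm
  by_cases hjK : j ∈ K
  · rw [if_pos hjK] at hce; omega
  · rw [if_neg hjK] at hce; exact ⟨by omega, hjK, by omega⟩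

lemma mu_spec (h : IsReversePrimitiveTransfer B C v K M) {j : V} (hv : B j v = 1)
    (hjK : j ∉ K) : mu B M j ∈ M ∧ B j (mu B M j) = 1 := by
  have hce := h.col_eq j
  rw [if_neg hjK] at hce
  have hsum : ∑ m' ∈ M, B j m' ≠ 0 := by omega
  have hex : ∃ m ∈ M, B j m = 1 := by
    obtain ⟨m, hm, hne⟩ := Finset.exists_ne_zero_of_sum_ne_zero hsum
    rcases h.zeroOne j m with h0 | h0
    · exact absurd h0 hne
    · exact ⟨m, hm, h0⟩
  rw [mu, dif_pos hex]
  exact ⟨hex.choose_spec.1, hex.choose_spec.2⟩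

lemma mu_uniq (h : IsReversePrimitiveTransfer B C v K M) {j m : V} (hv : B j v = 1)
    (hjK : j ∉ K) (hm : m ∈ M) (hBm : B j m = 1) : m = mu B M j := by
  obtain ⟨hmu, hBmu⟩ := mu_spec h hv hjK
  by_contra hne
  have hsub : {m, mu B M j} ⊆ M := by
    intro a ha; simp at ha; rcases ha with rfl | rfl <;> assumption
  have h2 : ∑ m' ∈ ({m, mu B M j} : Finset V), B j m' = 2 := by
    rw [Finset.sum_pair hne, hBm, hBmu]
  have hle : ∑ m' ∈ ({m, mu B M j} : Finset V), B j m' ≤ ∑ m' ∈ M, B j m' :=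
    Finset.sum_le_sum_of_subset hsub
  have := (Bv_of_mem h hm hBm).2.2
  omega

lemma mu_ne_v (h : IsReversePrimitiveTransfer B C v K M) {j : V} (hv : B j v = 1)
    (hjK : j ∉ K) : mu B M j ≠ v :=
  fun hh => v_not_M h (hh ▸ (mu_spec h hv hjK).1)

end Matrix

section Paths
variable {B C : V → V → ℕ} {v : V} {K M : Finset V}

lemma phi_zero (x : ℕ → V) : phi B v K M x 0 = x 0 := by
  simp [phi, st]

lemma f_succ_ins (x : ℕ → V) {n : ℕ} (hi : ins v K x n) :
    f v K x (n+1) = f v K x n + 2 := by rw [f, if_pos hi]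

lemma f_succ_nins (x : ℕ → V) {n : ℕ} (hi : ¬ ins v K x n) :
    f v K x (n+1) = f v K x n + 1 := by rw [f, if_neg hi]

lemma phi_path (h : IsReversePrimitiveTransfer B C v K M) {x : ℕ → V} (hx : IsPath B x) :
    IsPath C (phi B v K M x) := by
  intro i
  obtain ⟨n, hn | ⟨hi, hn⟩⟩ := cover v K x i
  · subst hn
    by_cases hins : ins v K x n
    · rw [phi_f, phi_f_ins B v K M x hins]
      have hBv : B (x n) v = 1 := by rw [← hins.1]; exact hx n
      obtain ⟨hmu, hBmu⟩ := mu_spec h hBv hins.2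
      rw [C_eq_B h (mu_ne_v h hBv hins.2)]
      exact hBmu
    · rw [show f v K x n + 1 = f v K x (n+1) from (f_succ_nins x hins).symm]
      rw [phi_f, phi_f]
      by_cases hv : x (n+1) = v
      · have hK : x n ∈ K := by by_contra hK; exact hins ⟨hv, hK⟩
        rw [hv, C_v h, if_pos (Finset.mem_union_left _ hK)]
      · rw [C_eq_B h hv]; exact hx n
  · subst hn
    rw [show f v K x n + 1 + 1 = f v K x (n+1) from by rw [f_succ_ins x hi]]
    rw [phi_f_ins B v K M x hi, phi_f]
    have hBv : B (x n) v = 1 := by rw [← hi.1]; exact hx n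
    obtain ⟨hmu, _⟩ := mu_spec h hBv hi.2
    rw [hi.1, C_v h, if_pos (Finset.mem_union_right _ hmu)]

lemma r_succ_del (y : ℕ → V) {n : ℕ} (hd : del M v y (r M v y n + 1)) :
    r M v y (n+1) = r M v y n + 2 := by rw [r, if_pos hd]

lemma r_succ_ndel (y : ℕ → V) {n : ℕ} (hd : ¬ del M v y (r M v y n + 1)) :
    r M v y (n+1) = r M v y n + 1 := by rw [r, if_neg hd]

lemma r_kept (h : IsReversePrimitiveTransfer B C v K M) {y : ℕ → V} (hy0 : y 0 = v) :
    ∀ n, ¬ del M v y (r M v y n) := by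
  intro n
  induction n with
  | zero =>
    intro hd
    have h1 : y (r M v y 0) ∈ M := hd.1
    rw [show r M v y 0 = 0 from rfl, hy0] at h1
    exact v_not_M h h1
  | succ n ih =>
    by_cases hd : del M v y (r M v y n + 1)
    · rw [r_succ_del y hd]
      intro hd2
      have h1 : y (r M v y n + 2) ∈ M := hd2.1
      rw [show r M v y n + 2 = (r M v y n + 1) + 1 from rfl, hd.2] at h1
      exact v_not_M h h1
    · rw [r_succ_ndel y hd]; exact hd

lemma psi_path (h : IsReversePrimitiveTransfer B C v K M) {y : ℕ → V} (hy : IsPath C y)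
    (hy0 : y 0 = v) : IsPath B (psi M v y) := by
  intro n
  simp only [psi]
  by_cases hd : del M v y (r M v y n + 1)
  · rw [r_succ_del y hd, show r M v y n + 2 = (r M v y n + 1) + 1 from rfl, hd.2]
    have hCm : C (y (r M v y n)) (y (r M v y n + 1)) = 1 := hy _
    have hBm : B (y (r M v y n)) (y (r M v y n + 1)) = 1 := by
      rw [← C_eq_B h (fun hh => v_not_M h (hh ▸ hd.1))]; exact hCm
    exact (Bv_of_mem h hd.1 hBm).1
  · rw [r_succ_ndel y hd]
    by_cases hv : y (r M v y n + 1) = v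
    · have hC : C (y (r M v y n)) v = 1 := by
        have := hy (r M v y n); rw [hv] at this; exact this
      rw [C_v h] at hC
      have hmem : y (r M v y n) ∈ K ∪ M := by
        by_contra hmem; rw [if_neg hmem] at hC; omega
      rcases Finset.mem_union.mp hmem with hK | hM
      · rw [hv]; exact (K_to_v h hK).1
      · exact absurd ⟨hM, hv⟩ (r_kept h hy0 n)
    · rw [← C_eq_B h hv]; exact hy _

lemma psi_zero (y : ℕ → V) : psi M v y 0 = y 0 := rfl

end Paths
end RPT

namespace RPT
variable {V : Type*} [DecidableEq V]

section Inv
variable {B C : V → V → ℕ} {v : V} {K M : Finset V}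

/-- kept positions of `phi x` are not deleted. -/
lemma notdel_phi_f (h : IsReversePrimitiveTransfer B C v K M) {x : ℕ → V}
    (hx : IsPath B x) (n : ℕ) : ¬ del M v (phi B v K M x) (f v K x n) := by
  intro hd
  have h1 : x n ∈ M := by have := hd.1; rw [phi_f] at this; exact this
  by_cases hins : ins v K x n
  · have h2 : phi B v K M x (f v K x n + 1) = mu B M (x n) := phi_f_ins B v K M x hins
    have hBv : B (x n) v = 1 := by rw [← hins.1]; exact hx n
    have := hd.2
    rw [h2] at this
    exact mu_ne_v h hBv hins.2 this
  · have h2 : phi B v K M x (f v K x n + 1) = x (n+1) := by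
      rw [show f v K x n + 1 = f v K x (n+1) from (f_succ_nins x hins).symm, phi_f]
    have hv1 : x (n+1) = v := by rw [← h2]; exact hd.2
    have hK : x n ∈ K := by by_contra hK; exact hins ⟨hv1, hK⟩
    exact (Finset.disjoint_left.mp h.disjKM hK) h1

/-- `del` holds at inserted positions, and exactly characterizes insertion. -/
lemma del_phi_iff (h : IsReversePrimitiveTransfer B C v K M) {x : ℕ → V}
    (hx : IsPath B x) (n : ℕ) :
    del M v (phi B v K M x) (f v K x n + 1) ↔ ins v K x n := by
  constructor
  · intro hd
    by_contra hins
    rw [show f v K x n + 1 = f v K x (n+1) from (f_succ_nins x hins).symm] at hd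
    exact notdel_phi_f h hx (n+1) hd
  · intro hins
    have hBv : B (x n) v = 1 := by rw [← hins.1]; exact hx n
    constructor
    · rw [phi_f_ins B v K M x hins]
      exact (mu_spec h hBv hins.2).1
    · rw [show f v K x n + 1 + 1 = f v K x (n+1) from by rw [f_succ_ins x hins], phi_f]
      exact hins.1

lemma r_phi (h : IsReversePrimitiveTransfer B C v K M) {x : ℕ → V} (hx : IsPath B x) :
    ∀ n, r M v (phi B v K M x) n = f v K x n := by
  intro n
  induction n with
  | zero => rfl
  | succ n ih =>
    by_cases hins : ins v K x n
    · have hd : del M v (phi B v K M x) (r M v (phi B v K M x) n + 1) := by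
        rw [ih]; exact (del_phi_iff h hx n).mpr hins
      rw [r_succ_del _ hd, ih, f_succ_ins x hins]
    · have hd : ¬ del M v (phi B v K M x) (r M v (phi B v K M x) n + 1) := by
        rw [ih]; exact fun hd => hins ((del_phi_iff h hx n).mp hd)
      rw [r_succ_ndel _ hd, ih, f_succ_nins x hins]

lemma psi_phi (h : IsReversePrimitiveTransfer B C v K M) {x : ℕ → V} (hx : IsPath B x) :
    psi M v (phi B v K M x) = x := by
  funext n
  rw [psi, r_phi h hx, phi_f]

/-- insertion of the contracted path matches deletion of `y`. -/
lemma ins_psi_iff (h : IsReversePrimitiveTransfer B C v K M) {y : ℕ → V} (hy : IsPath C y)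
    (hy0 : y 0 = v) (n : ℕ) :
    ins v K (psi M v y) n ↔ del M v y (r M v y n + 1) := by
  constructor
  · intro hins
    by_contra hd
    have hr : r M v y (n+1) = r M v y n + 1 := r_succ_ndel y hd
    have hv1 : y (r M v y n + 1) = v := by
      have := hins.1; rw [psi, hr] at this; exact this
    have hC : C (y (r M v y n)) v = 1 := by
      have := hy (r M v y n); rw [hv1] at this; exact this
    rw [C_v h] at hC
    have hmem : y (r M v y n) ∈ K ∪ M := by
      by_contra hmem; rw [if_neg hmem] at hC; omega
    rcases Finset.mem_union.mp hmem with hK | hM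
    · exact hins.2 hK
    · exact r_kept h hy0 n ⟨hM, hv1⟩
  · intro hd
    constructor
    · rw [psi, r_succ_del y hd, show r M v y n + 2 = (r M v y n + 1) + 1 from rfl]
      exact hd.2
    · rw [psi]
      have hCm : C (y (r M v y n)) (y (r M v y n + 1)) = 1 := hy _
      have hBm : B (y (r M v y n)) (y (r M v y n + 1)) = 1 := by
        rw [← C_eq_B h (fun hh => v_not_M h (hh ▸ hd.1))]; exact hCm
      exact (Bv_of_mem h hd.1 hBm).2.1

lemma f_psi (h : IsReversePrimitiveTransfer B C v K M) {y : ℕ → V} (hy : IsPath C y)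
    (hy0 : y 0 = v) : ∀ n, f v K (psi M v y) n = r M v y n := by
  intro n
  induction n with
  | zero => rfl
  | succ n ih =>
    by_cases hd : del M v y (r M v y n + 1)
    · rw [f_succ_ins _ ((ins_psi_iff h hy hy0 n).mpr hd), r_succ_del y hd, ih]
    · rw [f_succ_nins _ (fun hins => hd ((ins_psi_iff h hy hy0 n).mp hins)),
        r_succ_ndel y hd, ih]

lemma phi_psi (h : IsReversePrimitiveTransfer B C v K M) {y : ℕ → V} (hy : IsPath C y)
    (hy0 : y 0 = v) : phi B v K M (psi M v y) = y := by
  set x := psi M v y with hxdef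
  funext i
  obtain ⟨n, hn | ⟨hi, hn⟩⟩ := cover v K x i
  · subst hn
    rw [phi_f, f_psi h hy hy0]
    rfl
  · subst hn
    have hd : del M v y (r M v y n + 1) := (ins_psi_iff h hy hy0 n).mp hi
    rw [phi_f_ins B v K M x hi, f_psi h hy hy0]
    -- y (r n + 1) = mu (x n)
    have hCm : C (y (r M v y n)) (y (r M v y n + 1)) = 1 := hy _
    have hBm : B (y (r M v y n)) (y (r M v y n + 1)) = 1 := by
      rw [← C_eq_B h (fun hh => v_not_M h (hh ▸ hd.1))]; exact hCm
    obtain ⟨hBv, hnK, _⟩ := Bv_of_mem h hd.1 hBm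
    have : y (r M v y n + 1) = mu B M (y (r M v y n)) := mu_uniq h hBv hnK hd.1 hBm
    exact this.symm

end Inv
end RPT

namespace RPT
variable {V : Type*} [DecidableEq V]

section Seq
variable {B C : V → V → ℕ} {v : V} {K M : Finset V}

lemma ins_match {x y : ℕ → V} {k : ℤ} {N : ℕ} (hNk : (N : ℤ) ≥ k)
    (hm : ∀ n ≥ N, x n = y (((n : ℤ) - k).toNat)) {n : ℕ} (hn : n ≥ N) :
    ins v K x n ↔ ins v K y (((n : ℤ) - k).toNat) := by
  have h1 : x n = y (((n : ℤ) - k).toNat) := hm n hn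
  have h2 : x (n+1) = y (((n : ℤ) - k).toNat + 1) := by
    have := hm (n+1) (by omega)
    rwa [show (((n+1 : ℕ) : ℤ) - k).toNat = ((n : ℤ) - k).toNat + 1 by omega] at this
  unfold ins
  rw [h1, h2]

lemma f_diff {x y : ℕ → V} {k : ℤ} {N : ℕ} (hNk : (N : ℤ) ≥ k)
    (hm : ∀ n ≥ N, x n = y (((n : ℤ) - k).toNat)) :
    ∀ n ≥ N, (f v K x n : ℤ) - f v K y (((n : ℤ) - k).toNat) =
      (f v K x N : ℤ) - f v K y (((N : ℤ) - k).toNat) := by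
  intro n hn
  induction n, hn using Nat.le_induction with
  | base => rfl
  | succ n hn ih =>
    have hnk : (((n+1 : ℕ) : ℤ) - k).toNat = ((n : ℤ) - k).toNat + 1 := by omega
    rw [hnk]
    by_cases hins : ins v K x n
    · have hins' : ins v K y (((n : ℤ) - k).toNat) := (ins_match hNk hm hn).mp hins
      rw [f_succ_ins x hins, f_succ_ins y hins']
      push_cast
      omega
    · have hins' : ¬ ins v K y (((n : ℤ) - k).toNat) :=
        fun hh => hins ((ins_match hNk hm hn).mpr hh)
      rw [f_succ_nins x hins, f_succ_nins y hins']
      push_cast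
      omega

lemma sequiv_phi {x y : ℕ → V} {k : ℤ} {N : ℕ} (hNk : (N : ℤ) ≥ k)
    (hm : ∀ n ≥ N, x n = y (((n : ℤ) - k).toNat)) :
    SEquiv (phi B v K M x) ((f v K x N : ℤ) - f v K y (((N : ℤ) - k).toNat))
      (phi B v K M y) := by
  set j : ℤ := (f v K x N : ℤ) - f v K y (((N : ℤ) - k).toNat) with hj
  refine ⟨f v K x N, by omega, ?_⟩
  intro i hi
  obtain ⟨n, hn | ⟨hins, hn⟩⟩ := cover v K x i
  · subst hn
    have hnN : n ≥ N := by
      by_contra hc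
      have := f_strictMono v K x (show n < N by omega)
      omega
    have hdiff := f_diff (v := v) (K := K) hNk hm n hnN
    have htn : (((f v K x n : ℕ) : ℤ) - j).toNat = f v K y (((n : ℤ) - k).toNat) := by omega
    rw [htn, phi_f, phi_f]
    exact hm n hnN
  · subst hn
    have hnN : n ≥ N := by
      by_contra hc
      have h1 : n + 1 ≤ N := by omega
      have h2 : f v K x (n+1) ≤ f v K x N := f_strictMono v K x |>.le_iff_le.mpr h1
      have h3 : f v K x (n+1) = f v K x n + 2 := f_succ_ins x hins
      omega
    have hdiff := f_diff (v := v) (K := K) hNk hm n hnN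
    have hins' : ins v K y (((n : ℤ) - k).toNat) := (ins_match (v := v) (K := K) hNk hm hnN).mp hins
    have htn : (((f v K x n + 1 : ℕ) : ℤ) - j).toNat = f v K y (((n : ℤ) - k).toNat) + 1 := by
      push_cast
      omega
    rw [htn, phi_f_ins B v K M x hins, phi_f_ins B v K M y hins']
    rw [hm n hnN]

lemma lam_eq {x y : ℕ → V} {k : ℤ} (hs : SEquiv x k y) {N : ℕ} (hNk : (N : ℤ) ≥ k)
    (hm : ∀ n ≥ N, x n = y (((n : ℤ) - k).toNat)) :
    lam v K x k y = (f v K x N : ℤ) - f v K y (((N : ℤ) - k).toNat) := by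
  rw [lam, dif_pos hs]
  obtain ⟨hN0k, hm0⟩ := hs.choose_spec
  set N0 := hs.choose
  set N2 := max N N0 with hN2
  have e1 := f_diff (v := v) (K := K) hNk hm N2 (le_max_left _ _)
  have e2 := f_diff (v := v) (K := K) hN0k hm0 N2 (le_max_right _ _)
  omega

lemma sequiv_phi_lam {x y : ℕ → V} {k : ℤ} (hs : SEquiv x k y) :
    SEquiv (phi B v K M x) (lam v K x k y) (phi B v K M y) := by
  obtain ⟨hN0k, hm0⟩ := hs.choose_spec
  rw [lam_eq hs hN0k hm0]
  exact sequiv_phi hN0k hm0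

end Seq
end RPT

namespace RPT
variable {V : Type*} [DecidableEq V]

section Final
variable {B C : V → V → ℕ} {v : V} {K M : Finset V}

lemma lam_k_inj {x y : ℕ → V} {k k' : ℤ} (hs : SEquiv x k y) (hs' : SEquiv x k' y)
    (he : lam v K x k y = lam v K x k' y) : k = k' := by
  obtain ⟨N1, hN1, hm1⟩ := hs
  obtain ⟨N2, hN2, hm2⟩ := hs'
  set N : ℕ := N1 + N2 + k.toNat + k'.toNat with hN
  have e1 : lam v K x k y = (f v K x N : ℤ) - f v K y (((N : ℤ) - k).toNat) :=
    lam_eq ⟨N1, hN1, hm1⟩ (by omega) (fun n hn => hm1 n (by omega))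
  have e2 : lam v K x k' y = (f v K x N : ℤ) - f v K y (((N : ℤ) - k').toNat) :=
    lam_eq ⟨N2, hN2, hm2⟩ (by omega) (fun n hn => hm2 n (by omega))
  have e3 : f v K y (((N : ℤ) - k).toNat) = f v K y (((N : ℤ) - k').toNat) := by omega
  have e4 := (f_strictMono v K y).injective e3
  omega

lemma lam_cocycle {x y z : ℕ → V} {k l : ℤ} (hxy : SEquiv x k y) (hyz : SEquiv y l z) :
    lam v K x k y + lam v K y l z = lam v K x (k + l) z := by
  obtain ⟨N1, hN1, hm1⟩ := hxy
  obtain ⟨N2, hN2, hm2⟩ := hyz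
  set N : ℕ := N1 + N2 + k.toNat + l.toNat + (k+l).toNat with hNdef
  have hNk : (N : ℤ) ≥ k := by omega
  have hm1' : ∀ n ≥ N, x n = y (((n : ℤ) - k).toNat) := fun n hn => hm1 n (by omega)
  set N' : ℕ := ((N : ℤ) - k).toNat with hN'def
  have hN'2 : N' ≥ N2 := by omega
  have hN'l : (N' : ℤ) ≥ l := by omega
  have hm2' : ∀ n ≥ N', y n = z (((n : ℤ) - l).toNat) := fun n hn => hm2 n (by omega)
  have hNkl : (N : ℤ) ≥ k + l := by omega
  have hm3 : ∀ n ≥ N, x n = z (((n : ℤ) - (k + l)).toNat) := by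
    intro n hn
    rw [hm1' n hn, hm2' (((n : ℤ) - k).toNat) (by omega)]
    congr 1
    omega
  have e1 := lam_eq (v := v) (K := K) ⟨N1, hN1, hm1⟩ hNk hm1'
  rw [← hN'def] at e1
  have e2 := lam_eq (v := v) (K := K) ⟨N2, hN2, hm2⟩ hN'l hm2'
  have e3 := lam_eq (v := v) (K := K) ⟨N, hNkl, hm3⟩ hNkl hm3
  have e4 : (((N' : ℤ)) - l).toNat = (((N : ℤ)) - (k + l)).toNat := by omega
  rw [e1, e2, e3, e4]
  omega

lemma del_congr {u w : ℕ → V} {a b : ℕ} (h1 : u a = w b) (h2 : u (a+1) = w (b+1)) :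
    del M v u a ↔ del M v w b := by
  unfold del; rw [h1, h2]

lemma surj_triple (h : IsReversePrimitiveTransfer B C v K M) {u w : ℕ → V} {j : ℤ}
    (hu : IsPath C u) (hw : IsPath C w) (hu0 : u 0 = v) (hw0 : w 0 = v)
    (hs : SEquiv u j w) :
    ∃ k : ℤ, SEquiv (psi M v u) k (psi M v w) ∧ lam v K (psi M v u) k (psi M v w) = j := by
  obtain ⟨N, hNj, hm⟩ := hs
  set x := psi M v u with hxdef
  set y := psi M v w with hydef
  have hxB : IsPath B x := psi_path h hu hu0
  have hyB : IsPath B y := psi_path h hw hw0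
  have hux : phi B v K M x = u := phi_psi h hu hu0
  have hwy : phi B v K M y = w := phi_psi h hw hw0
  have hiN : f v K x N ≥ N := f_le v K x N
  set i0 : ℕ := f v K x N with hi0def
  set p' : ℕ := ((i0 : ℤ) - j).toNat with hp'def
  have hp' : (p' : ℤ) = (i0 : ℤ) - j := by omega
  -- u and w match at positions ≥ N
  have hmatch : ∀ i ≥ N, u i = w (((i : ℤ) - j).toNat) := hm
  -- p' is a kept position of w
  have hndelu : ¬ del M v u i0 := by
    have := notdel_phi_f h hxB N
    rwa [hux] at this
  have hndelw : ¬ del M v w p' := by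
    intro hd
    apply hndelu
    have h1 : u i0 = w p' := by
      have := hmatch i0 (by omega); rwa [← hp'def] at this
    have h2 : u (i0 + 1) = w (p' + 1) := by
      have := hmatch (i0 + 1) (by omega)
      rwa [show (((i0 + 1 : ℕ) : ℤ) - j).toNat = p' + 1 by omega] at this
    exact (del_congr (v := v) h1 h2).mpr hd
  obtain ⟨m, hpm⟩ : ∃ m, p' = f v K y m := by
    obtain ⟨m, hm' | ⟨hinsm, hm'⟩⟩ := cover v K y p'
    · exact ⟨m, hm'⟩
    · exfalso
      apply hndelw
      have := (del_phi_iff h hyB m).mpr hinsm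
      rwa [hwy, ← hm'] at this
  set k : ℤ := (N : ℤ) - m with hkdef
  have claim1 : ∀ n ≥ N, (f v K x n : ℤ) - j = f v K y (((n : ℤ) - k).toNat) := by
    intro n hn
    induction n, hn using Nat.le_induction with
    | base =>
      rw [show (((N : ℕ) : ℤ) - k).toNat = m by omega]
      omega
    | succ n hn ih =>
      have hfn : f v K x n ≥ N := by have := f_le v K x n; omega
      set n' : ℕ := (((n : ℤ)) - k).toNat with hn'def
      have hn' : (n' : ℤ) = (n : ℤ) - k := by omega
      have hidx : (((n + 1 : ℕ) : ℤ) - k).toNat = n' + 1 := by omega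
      have insiff : ins v K x n ↔ ins v K y n' := by
        have i1 : ins v K x n ↔ del M v u (f v K x n + 1) := by
          rw [← hux]; exact (del_phi_iff h hxB n).symm
        have i2 : del M v u (f v K x n + 1) ↔ del M v w (f v K y n' + 1) := by
          apply del_congr (v := v)
          · have := hmatch (f v K x n + 1) (by omega)
            rwa [show (((f v K x n + 1 : ℕ) : ℤ) - j).toNat = f v K y n' + 1 by omega] at this
          · have := hmatch (f v K x n + 2) (by omega)
            rwa [show (((f v K x n + 2 : ℕ) : ℤ) - j).toNat = f v K y n' + 1 + 1 by omega] at this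
        have i3 : del M v w (f v K y n' + 1) ↔ ins v K y n' := by
          rw [← hwy]; exact del_phi_iff h hyB n'
        rw [i1, i2, i3]
      rw [hidx]
      by_cases hins : ins v K x n
      · rw [f_succ_ins x hins, f_succ_ins y (insiff.mp hins)]
        push_cast; omega
      · rw [f_succ_nins x hins, f_succ_nins y (fun hh => hins (insiff.mpr hh))]
        push_cast; omega
  have claim2 : ∀ n ≥ N, x n = y (((n : ℤ) - k).toNat) := by
    intro n hn
    have hfn : f v K x n ≥ N := by have := f_le v K x n; omega
    have e1 : x n = u (f v K x n) := by rw [← hux, phi_f]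
    have e2 : y (((n : ℤ) - k).toNat) = w (f v K y (((n : ℤ) - k).toNat)) := by
      rw [← hwy, phi_f]
    rw [e1, e2, hmatch (f v K x n) hfn]
    congr 1
    have := claim1 n hn
    omega
  have hNk : (N : ℤ) ≥ k := by omega
  have hseq : SEquiv x k y := ⟨N, hNk, claim2⟩
  refine ⟨k, hseq, ?_⟩
  rw [lam_eq hseq hNk claim2, show (((N : ℕ) : ℤ) - k).toNat = m by omega]
  omega

end Final
end RPT

theorem stmt_10 {V : Type*} [DecidableEq V] (B C : V → V → ℕ) (v : V) (K M : Finset V)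
    (hrf : RowFinite B) (hcof : Cofinal B v)
    (h : IsReversePrimitiveTransfer B C v K M) :
    ∃ (φ : (ℕ → V) → (ℕ → V)) (lam : (ℕ → V) → ℤ → (ℕ → V) → ℤ),
      Set.BijOn φ {x | IsPath B x ∧ x 0 = v} {y | IsPath C y ∧ y 0 = v} ∧
      Set.BijOn (fun t : (ℕ → V) × ℤ × (ℕ → V) => (φ t.1, lam t.1 t.2.1 t.2.2, φ t.2.2))
        (PGrpd B v) (PGrpd C v) ∧
      ∀ x k y l z, (x, k, y) ∈ PGrpd B v → (y, l, z) ∈ PGrpd B v →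
        lam x k y + lam y l z = lam x (k + l) z := by
  refine ⟨RPT.phi B v K M, RPT.lam v K, ?_, ?_, ?_⟩
  · exact Set.InvOn.bijOn
      ⟨fun x hx => RPT.psi_phi h hx.1, fun y hy => RPT.phi_psi h hy.1 hy.2⟩
      (fun x hx => ⟨RPT.phi_path h hx.1, (RPT.phi_zero x).trans hx.2⟩)
      (fun y hy => ⟨RPT.psi_path h hy.1 hy.2, (RPT.psi_zero y).trans hy.2⟩)
  · refine ⟨?_, ?_, ?_⟩
    · rintro ⟨x, k, y⟩ ⟨⟨h1, h2, h3⟩, h4, h5⟩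
      exact ⟨⟨RPT.phi_path h h1, RPT.phi_path h h2, RPT.sequiv_phi_lam h3⟩,
        (RPT.phi_zero (B := B) (M := M) x).trans h4,
        (RPT.phi_zero (B := B) (M := M) y).trans h5⟩
    · rintro ⟨x1, k1, y1⟩ ⟨⟨hx1, hy1, hs1⟩, hx10, hy10⟩
        ⟨x2, k2, y2⟩ ⟨⟨hx2, hy2, hs2⟩, hx20, hy20⟩ he
      simp only [Prod.mk.injEq] at he
      obtain ⟨he1, he2, he3⟩ := he
      dsimp only at hx1 hy1 hs1 hx2 hy2 hs2
      have ex : x1 = x2 := by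
        rw [← RPT.psi_phi h hx1, ← RPT.psi_phi h hx2, he1]
      have ey : y1 = y2 := by
        rw [← RPT.psi_phi h hy1, ← RPT.psi_phi h hy2, he3]
      subst ex; subst ey
      have ek : k1 = k2 := RPT.lam_k_inj hs1 hs2 he2
      rw [ek]
    · rintro ⟨u, j, w⟩ ⟨⟨hu, hw, hs⟩, hu0, hw0⟩
      obtain ⟨k, hseq, hlam⟩ := RPT.surj_triple h hu hw hu0 hw0 hs
      refine ⟨(RPT.psi M v u, k, RPT.psi M v w),
        ⟨⟨RPT.psi_path h hu hu0, RPT.psi_path h hw hw0, hseq⟩,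
          (RPT.psi_zero u).trans hu0, (RPT.psi_zero w).trans hw0⟩, ?_⟩
      simp only [Prod.mk.injEq]
      exact ⟨RPT.phi_psi h hu hu0, hlam, RPT.phi_psi h hw hw0⟩
  · intro x k y l z hxy hyz
    exact RPT.lam_cocycle hxy.1.2.2 hyz.1.2.2
end

section
/- On the type of pairs (n, G) with n : ℕ and G a 0-1 matrix over Fin n, let R_vertex be the relation 'H is, up to a relabeling bijection of its index type, a vertex explosion of G at some vertex v with respect to some partition (M₁, M₂)', and let R_edge be the subrelation where moreover M₁ is a singleton (edge explosion). Then the equivalence relation generated by R_edge equals the equivalence relation generated by R_vertex. -/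
/-- The conditions on the data `(v, M₁, M₂)` of a vertex explosion of the 0-1 matrix `B`:
`M₁` and `M₂` are a partition of `supp(B v) = {w | B v w = 1}` into nonempty sets. -/
structure ExplosionData {V : Type*} (B : V → V → ℕ) (v : V) (M₁ M₂ : Set V) : Prop where
  zeroOne : IsZeroOne B
  nonempty₁ : M₁.Nonempty
  nonempty₂ : M₂.Nonempty
  disj : Disjoint M₁ M₂
  union : M₁ ∪ M₂ = {w | B v w = 1}

open Classical in
/-- The vertex explosion of `B` at `v` with respect to `(M₁, M₂)`; the vertex `v` is split
into `v′ = Sum.inr 0` and `v″ = Sum.inr 1`. -/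
noncomputable def vertexExplosion {V : Type*} (B : V → V → ℕ) (v : V) (M₁ M₂ : Set V) :
    ({u : V // u ≠ v} ⊕ Fin 2) → ({u : V // u ≠ v} ⊕ Fin 2) → ℕ
  | Sum.inl u, Sum.inl w => B u.1 w.1
  | Sum.inl u, Sum.inr _ => B u.1 v
  | Sum.inr a, Sum.inl w => if (a = 0 ∧ w.1 ∈ M₁) ∨ (a = 1 ∧ w.1 ∈ M₂) then 1 else 0
  | Sum.inr a, Sum.inr _ => if (a = 0 ∧ v ∈ M₁) ∨ (a = 1 ∧ v ∈ M₂) then 1 else 0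

/-- `H` is, up to a relabeling bijection of its index type, a vertex explosion of `G`. -/
def RVertex (G H : Σ n : ℕ, Fin n → Fin n → ℕ) : Prop :=
  ∃ (v : Fin G.1) (M₁ M₂ : Set (Fin G.1)),
    ExplosionData G.2 v M₁ M₂ ∧
    ∃ τ : Fin H.1 ≃ ({u : Fin G.1 // u ≠ v} ⊕ Fin 2),
      ∀ i j, H.2 i j = vertexExplosion G.2 v M₁ M₂ (τ i) (τ j)

/-- `H` is, up to a relabeling bijection of its index type, an edge explosion of `G`
(a vertex explosion in which `M₁` is a singleton). -/
def REdge (G H : Σ n : ℕ, Fin n → Fin n → ℕ) : Prop :=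
  ∃ (v : Fin G.1) (M₁ M₂ : Set (Fin G.1)),
    ExplosionData G.2 v M₁ M₂ ∧ (∃ e, M₁ = {e}) ∧
    ∃ τ : Fin H.1 ≃ ({u : Fin G.1 // u ≠ v} ⊕ Fin 2),
      ∀ i j, H.2 i j = vertexExplosion G.2 v M₁ M₂ (τ i) (τ j)

/-!
Every edge explosion is a vertex explosion, so only the converse needs proof, by induction on
`|M₁|`. If `|M₁| ≥ 2`, pick `e ∈ M₁` with `e ≠ v`. The explosions of `G` at `v` with respect to
`(M₁, M₂)` and to `(M₁ \ {e}, M₂ ∪ {e})` have a common edge explosion: splitting `e` off the copy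
of `v` whose row contains it gives, in both cases, `G` with `v` replaced by three vertices with
rows `M₁ \ {e}`, `{e}` and `M₂`. The second explosion has a smaller first part.
-/

open Set Relation

theorem ExplosionData.preimage {V V' : Type*} (σ : V' ≃ V) {B : V → V → ℕ}
    {B' : V' → V' → ℕ} (hB : ∀ x y, B' x y = B (σ x) (σ y)) {v : V} {M₁ M₂ : Set V}
    (hd : ExplosionData B v M₁ M₂) :
    ExplosionData B' (σ.symm v) (σ ⁻¹' M₁) (σ ⁻¹' M₂) where
  zeroOne i j := hB i j ▸ hd.zeroOne (σ i) (σ j)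
  nonempty₁ := hd.nonempty₁.preimage σ.surjective
  nonempty₂ := hd.nonempty₂.preimage σ.surjective
  disj := hd.disj.preimage σ
  union := by
    rw [← preimage_union, hd.union]
    ext x
    simp [hB]

theorem exists_equiv_vertexExplosion_eq {V V' : Type*} (σ : V' ≃ V) {B : V → V → ℕ}
    {B' : V' → V' → ℕ} (hB : ∀ x y, B' x y = B (σ x) (σ y)) (v : V) (M₁ M₂ : Set V) :
    ∃ ψ : ({u : V' // u ≠ σ.symm v} ⊕ Fin 2) ≃ ({u : V // u ≠ v} ⊕ Fin 2),
      ∀ a b, vertexExplosion B' (σ.symm v) (σ ⁻¹' M₁) (σ ⁻¹' M₂) a b =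
        vertexExplosion B v M₁ M₂ (ψ a) (ψ b) := by
  classical
  refine ⟨Equiv.sumCongr (σ.subtypeEquiv fun u => by simp [Equiv.eq_symm_apply])
    (Equiv.refl _), ?_⟩
  rintro (a | a) (b | b) <;> simp [vertexExplosion, hB, Equiv.subtypeEquiv]

theorem IsZeroOne.vertexExplosion {V : Type*} {B : V → V → ℕ} (hB : IsZeroOne B) (v : V)
    (M₁ M₂ : Set V) : IsZeroOne (vertexExplosion B v M₁ M₂) := by
  rintro (i | i) (j | j) <;> simp only [_root_.vertexExplosion]
  · exact hB _ _
  · exact hB _ _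
  all_goals split <;> simp

theorem ExplosionData.diff_insert {V : Type*} {B : V → V → ℕ} {v e : V} {M₁ M₂ : Set V}
    (hd : ExplosionData B v M₁ M₂) (he : e ∈ M₁) (hne : (M₁ \ {e}).Nonempty) :
    ExplosionData B v (M₁ \ {e}) (insert e M₂) where
  zeroOne := hd.zeroOne
  nonempty₁ := hne
  nonempty₂ := insert_nonempty e M₂
  disj := disjoint_insert_right.2 ⟨fun h => h.2 rfl, hd.disj.mono_left sdiff_subset⟩
  union := by
    rw [union_insert, ← insert_union, insert_sdiff_singleton, insert_eq_of_mem he, hd.union]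

theorem explosionData_singleton_diff {V : Type*} {B : V → V → ℕ} (hB : IsZeroOne B) {x y z : V}
    (hy : B x y = 1) (hz : B x z = 1) (hzy : z ≠ y) :
    ExplosionData B x {y} ({w | B x w = 1} \ {y}) where
  zeroOne := hB
  nonempty₁ := singleton_nonempty y
  nonempty₂ := ⟨z, hz, hzy⟩
  disj := disjoint_sdiff_right
  union := union_sdiff_cancel (singleton_subset_iff.2 hy)

theorem exists_ne_vertexExplosion_inr_eq_one {V : Type*} (B : V → V → ℕ) {v e w : V}
    (hev : e ≠ v) (M₁ M₂ : Set V) (a : Fin 2) (hw : a = 0 ∧ w ∈ M₁ ∨ a = 1 ∧ w ∈ M₂)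
    (hwe : w ≠ e) :
    ∃ z, z ≠ .inl ⟨e, hev⟩ ∧ vertexExplosion B v M₁ M₂ (.inr a) z = 1 := by
  by_cases hwv : w = v
  · subst hwv
    exact ⟨.inr 0, Sum.inr_ne_inl, by simp [vertexExplosion, hw]⟩
  · exact ⟨.inl ⟨w, hwv⟩, by simpa using hwe, by simp [vertexExplosion, hw]⟩

/-- In `vertexExplosion_vertexExplosion_comm` both sides replace `v` by three vertices, with rows
`M₁ \ {e}`, `{e}` and `M₂`; this matches them up. -/
def doubleExplosionEquiv {V : Type*} (v : V) :
    ({x : {u : V // u ≠ v} ⊕ Fin 2 // x ≠ .inr 1} ⊕ Fin 2) ≃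
      ({x : {u : V // u ≠ v} ⊕ Fin 2 // x ≠ .inr 0} ⊕ Fin 2) where
  toFun
    | .inl ⟨.inl u, _⟩ => .inl ⟨.inl u, by simp⟩
    | .inl ⟨.inr _, _⟩ => .inr 1
    | .inr 0 => .inr 0
    | .inr 1 => .inl ⟨.inr 1, by simp⟩
  invFun
    | .inl ⟨.inl u, _⟩ => .inl ⟨.inl u, by simp⟩
    | .inl ⟨.inr _, _⟩ => .inr 1
    | .inr 0 => .inr 0
    | .inr 1 => .inl ⟨.inr 0, by simp⟩
  left_inv := by
    rintro (⟨u | a, h⟩ | a) <;> (try fin_cases a) <;> first | rfl | simp at h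
  right_inv := by
    rintro (⟨u | a, h⟩ | a) <;> (try fin_cases a) <;> first | rfl | simp at h

theorem vertexExplosion_vertexExplosion_comm {V : Type*} (B : V → V → ℕ) {v e : V} (hev : e ≠ v)
    (M₁ M₂ : Set V) (he₂ : e ∉ M₂) (a b) :
    vertexExplosion (vertexExplosion B v (M₁ \ {e}) (insert e M₂)) (.inr 1) {.inl ⟨e, hev⟩}
        ({x | vertexExplosion B v (M₁ \ {e}) (insert e M₂) (.inr 1) x = 1} \ {.inl ⟨e, hev⟩})
        a b =
      vertexExplosion (vertexExplosion B v M₁ M₂) (.inr 0) {.inl ⟨e, hev⟩}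
        ({x | vertexExplosion B v M₁ M₂ (.inr 0) x = 1} \ {.inl ⟨e, hev⟩})
        (doubleExplosionEquiv v a) (doubleExplosionEquiv v b) := by
  rcases a with ⟨u | a, ha⟩ | a <;> rcases b with ⟨w | b, hb⟩ | b <;>
    (try fin_cases a) <;> (try fin_cases b) <;>
    simp [doubleExplosionEquiv, vertexExplosion] <;> grind

noncomputable def finRelabel {V : Type*} [Fintype V] (B : V → V → ℕ) :
    Σ n : ℕ, Fin n → Fin n → ℕ :=
  ⟨Fintype.card V, fun i j => B ((Fintype.equivFin V).symm i) ((Fintype.equivFin V).symm j)⟩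

theorem REdge.of_equiv {G H : Σ n : ℕ, Fin n → Fin n → ℕ} {V : Type*} (σ : Fin G.1 ≃ V)
    {B : V → V → ℕ} (hB : ∀ i j, G.2 i j = B (σ i) (σ j)) {v e : V} {M₂ : Set V}
    (hd : ExplosionData B v {e} M₂) (ρ : Fin H.1 ≃ ({u : V // u ≠ v} ⊕ Fin 2))
    (hρ : ∀ i j, H.2 i j = vertexExplosion B v {e} M₂ (ρ i) (ρ j)) : REdge G H := by
  obtain ⟨ψ, hψ⟩ := exists_equiv_vertexExplosion_eq σ hB v {e} M₂
  refine ⟨σ.symm v, σ ⁻¹' {e}, σ ⁻¹' M₂, hd.preimage σ hB,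
    ⟨σ.symm e, by ext; simp [Equiv.eq_symm_apply]⟩, ρ.trans ψ.symm, fun i j => ?_⟩
  simp [hρ, hψ]

theorem rEdge_finRelabel {V : Type*} [Fintype V] [DecidableEq V] {B : V → V → ℕ} {v e : V}
    {M₂ : Set V} (hd : ExplosionData B v {e} M₂) :
    REdge (finRelabel B) (finRelabel (vertexExplosion B v {e} M₂)) :=
  REdge.of_equiv (Fintype.equivFin V).symm (fun _ _ => rfl) hd
    (Fintype.equivFin ({u // u ≠ v} ⊕ Fin 2)).symm fun _ _ => rfl

theorem exists_rEdge_finRelabel_and_rEdge {V : Type*} [Fintype V] [DecidableEq V]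
    {B : V → V → ℕ} {v e : V} {M₁ M₂ : Set V} (hd : ExplosionData B v M₁ M₂) (he : e ∈ M₁)
    (hev : e ≠ v) (hne : (M₁ \ {e}).Nonempty) {H : Σ n : ℕ, Fin n → Fin n → ℕ}
    (τ : Fin H.1 ≃ ({u : V // u ≠ v} ⊕ Fin 2))
    (hτ : ∀ i j, H.2 i j = vertexExplosion B v M₁ M₂ (τ i) (τ j)) :
    ∃ L, REdge (finRelabel (vertexExplosion B v (M₁ \ {e}) (insert e M₂))) L ∧ REdge H L := by
  have he₂ : e ∉ M₂ := disjoint_left.1 hd.disj he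
  obtain ⟨w₂, hw₂⟩ := hd.nonempty₂
  obtain ⟨w₁, hw₁, hw₁e⟩ := hne
  obtain ⟨z₂, hz₂e, hz₂⟩ := exists_ne_vertexExplosion_inr_eq_one B hev (M₁ \ {e}) (insert e M₂)
    1 (.inr ⟨rfl, .inr hw₂⟩) (ne_of_mem_of_not_mem hw₂ he₂)
  obtain ⟨z₁, hz₁e, hz₁⟩ := exists_ne_vertexExplosion_inr_eq_one B hev M₁ M₂
    0 (.inl ⟨rfl, hw₁⟩) hw₁e
  have hd₁ := explosionData_singleton_diff (hd.zeroOne.vertexExplosion v _ _)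
    (by simp [vertexExplosion]) hz₂ hz₂e
  have hd₂ := explosionData_singleton_diff (hd.zeroOne.vertexExplosion v _ _)
    (by simp [vertexExplosion, he]) hz₁ hz₁e
  exact ⟨_, rEdge_finRelabel hd₁, REdge.of_equiv τ hτ hd₂
    ((Fintype.equivFin _).symm.trans (doubleExplosionEquiv v)) fun _ _ =>
      vertexExplosion_vertexExplosion_comm B hev M₁ M₂ he₂ _ _⟩

theorem eqvGen_rEdge_of_vertexExplosion {G H : Σ n : ℕ, Fin n → Fin n → ℕ} {v : Fin G.1}
    {M₁ M₂ : Set (Fin G.1)} (hd : ExplosionData G.2 v M₁ M₂)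
    (τ : Fin H.1 ≃ ({u : Fin G.1 // u ≠ v} ⊕ Fin 2))
    (hτ : ∀ i j, H.2 i j = vertexExplosion G.2 v M₁ M₂ (τ i) (τ j)) :
    EqvGen REdge G H := by
  induction hn : M₁.ncard using Nat.strong_induction_on generalizing H M₁ M₂ with
  | _ n ih =>
  rcases hd.nonempty₁.exists_eq_singleton_or_nontrivial with hs | hs
  · exact .rel _ _ ⟨v, M₁, M₂, hd, hs, τ, hτ⟩
  obtain ⟨e, he, hev⟩ := hs.exists_ne v
  have hne : (M₁ \ {e}).Nonempty := hs.exists_ne e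
  have hlt : (M₁ \ {e}).ncard < n := hn ▸ ncard_sdiff_singleton_lt_of_mem he M₁.toFinite
  obtain ⟨L, hKL, hHL⟩ := exists_rEdge_finRelabel_and_rEdge hd he hev hne τ hτ
  have hGK := ih _ hlt (H := finRelabel (vertexExplosion G.2 v (M₁ \ {e}) (insert e M₂)))
    (hd.diff_insert he hne) (Fintype.equivFin ({u // u ≠ v} ⊕ Fin 2)).symm (fun _ _ => rfl) rfl
  exact hGK.trans _ _ _ ((EqvGen.rel _ _ hKL).trans _ _ _ (EqvGen.rel _ _ hHL).symm)

/-- Edge explosion and vertex explosion generate the same equivalence relation. -/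
theorem stmt_11 (G H : Σ n : ℕ, Fin n → Fin n → ℕ) :
    Relation.EqvGen REdge G H ↔ Relation.EqvGen RVertex G H := by
  refine ⟨EqvGen.mono (fun _ _ ⟨v, M₁, M₂, hd, _, τ, hτ⟩ => ⟨v, M₁, M₂, hd, τ, hτ⟩) G H,
    fun h => (EqvGen.is_equivalence REdge).eqvGen_iff.1 (EqvGen.mono ?_ G H h)⟩
  rintro G H ⟨v, M₁, M₂, hd, τ, hτ⟩
  exact eqvGen_rEdge_of_vertexExplosion hd τ hτ
end

section
/- Let B be a row-finite 0-1 matrix on V and let C be the vertex explosion of B at v with respect to (M₁, M₂). Then there is a bijection φ from the set of infinite paths of B onto the set of infinite paths of C such that for all infinite paths x, y of B and all k : ℤ, x ∼ₖ y (with respect to B) if and only if φ x ∼ₖ φ y (with respect to C); consequently (x,k,y) ↦ (φ x, k, φ y) is a bijection from the path groupoid 𝒢_B onto 𝒢_C. -/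
theorem stmt_12 {V : Type*} (B : V → V → ℕ) (v : V) (M₁ M₂ : Set V)
    (hrf : RowFinite B) (hdata : ExplosionData B v M₁ M₂)
    (C : ({u : V // u ≠ v} ⊕ Fin 2) → ({u : V // u ≠ v} ⊕ Fin 2) → ℕ)
    (hC : C = vertexExplosion B v M₁ M₂) :
    ∃ φ : (ℕ → V) → (ℕ → ({u : V // u ≠ v} ⊕ Fin 2)),
      Set.BijOn φ {x | IsPath B x} {y | IsPath C y} ∧
      (∀ x y, IsPath B x → IsPath B y → ∀ k : ℤ, (SEquiv x k y ↔ SEquiv (φ x) k (φ y))) ∧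
      Set.BijOn (fun t : (ℕ → V) × ℤ × (ℕ → V) => (φ t.1, t.2.1, φ t.2.2))
        (Grpd B) (Grpd C) := by
  subst hC
  obtain ⟨hzo, hn1, hn2, hdisj, hunion⟩ := hdata
  classical
  have hmem : ∀ w, B v w = 1 → w ∈ M₁ ∪ M₂ := fun w hw => by rw [hunion]; exact hw
  have hmem' : ∀ w, w ∈ M₁ ∪ M₂ → B v w = 1 := fun w hw => by rw [hunion] at hw; exact hw
  have hd : ∀ w, w ∈ M₂ → w ∉ M₁ := fun w h2 h1 => Set.disjoint_left.mp hdisj h1 h2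
  set φ : (ℕ → V) → (ℕ → ({u : V // u ≠ v} ⊕ Fin 2)) := fun x n =>
    if h : x n = v then (if x (n+1) ∈ M₁ then Sum.inr 0 else Sum.inr 1) else Sum.inl ⟨x n, h⟩
    with hφdef
  set ψ : (ℕ → ({u : V // u ≠ v} ⊕ Fin 2)) → (ℕ → V) := fun y n =>
    Sum.elim (fun u => u.1) (fun _ => v) (y n) with hψdef
  have hψφ : ∀ x, ψ (φ x) = x := by
    intro x; funext n
    simp only [hψdef, hφdef]
    by_cases h : x n = v
    · by_cases h1 : x (n+1) ∈ M₁ <;> simp [h, h1]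
    · simp [h]
  have hpf : ∀ x, IsPath B x → IsPath (vertexExplosion B v M₁ M₂) (φ x) := by
    intro x hx n
    have h1 := hx n
    simp only [hφdef]
    by_cases hn : x n = v
    · rw [hn] at h1
      have hv := hmem _ h1
      by_cases hn1 : x (n+1) = v
      · rw [hn1] at hv
        by_cases hm : v ∈ M₁
        · simp [hn, hn1, hm, vertexExplosion]
          by_cases hm2 : x (n+2) ∈ M₁ <;> simp [hm2, vertexExplosion, hm]
        · have hm2 : v ∈ M₂ := hv.resolve_left hm
          simp only [hn, hn1, hm, if_false, dif_pos]
          by_cases hm3 : x (n+2) ∈ M₁ <;> simp [hm3, vertexExplosion, hm2]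
      · by_cases hm : x (n+1) ∈ M₁
        · simp [hn, hn1, hm, vertexExplosion]
        · have hm2 : x (n+1) ∈ M₂ := hv.resolve_left hm
          simp [hn, hn1, hm, vertexExplosion, hm2]
    · by_cases hn1 : x (n+1) = v
      · rw [hn1] at h1
        by_cases hm : x (n+1+1) ∈ M₁ <;> simp [hn, hn1, hm, vertexExplosion, h1]
      · simp [hn, hn1, vertexExplosion, h1]
  have hpb : ∀ a, IsPath (vertexExplosion B v M₁ M₂) a → IsPath B (ψ a) := by
    intro a ha n
    have h1 := ha n
    simp only [hψdef]
    cases h : a n with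
    | inl u =>
      cases h2 : a (n+1) with
      | inl w => rw [h, h2] at h1; simpa [vertexExplosion] using h1
      | inr b => rw [h, h2] at h1; simpa [vertexExplosion] using h1
    | inr j =>
      cases h2 : a (n+1) with
      | inl w =>
        rw [h, h2] at h1
        simp only [vertexExplosion] at h1
        split at h1
        · next hc =>
            rcases hc with ⟨_, hm⟩ | ⟨_, hm⟩
            · exact hmem' _ (Or.inl hm)
            · exact hmem' _ (Or.inr hm)
        · omega
      | inr b =>
        rw [h, h2] at h1
        simp only [vertexExplosion] at h1
        split at h1
        · next hc =>
            rcases hc with ⟨_, hm⟩ | ⟨_, hm⟩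
            · exact hmem' _ (Or.inl hm)
            · exact hmem' _ (Or.inr hm)
        · omega
  have key : ∀ s t : ({u : V // u ≠ v} ⊕ Fin 2), vertexExplosion B v M₁ M₂ s t = 1 →
      (if h : (Sum.elim (fun u => u.1) (fun _ => v) s) = v then
        (if (Sum.elim (fun u => u.1) (fun _ => v) t) ∈ M₁ then
          (Sum.inr 0 : {u : V // u ≠ v} ⊕ Fin 2) else Sum.inr 1)
      else Sum.inl ⟨Sum.elim (fun u => u.1) (fun _ => v) s, h⟩) = s := by
    intro s t h1
    cases s with
    | inl u => simp [u.2]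
    | inr j =>
      cases t with
      | inl w =>
        simp only [vertexExplosion] at h1
        split at h1
        · next hc =>
            rcases hc with ⟨hj, hm⟩ | ⟨hj, hm⟩
            · simp [hj, hm]
            · simp [hj, hd _ hm]
        · omega
      | inr b =>
        simp only [vertexExplosion] at h1
        split at h1
        · next hc =>
            rcases hc with ⟨hj, hm⟩ | ⟨hj, hm⟩
            · simp [hj, hm]
            · simp [hj, hd _ hm]
        · omega
  have hφψ : ∀ a, IsPath (vertexExplosion B v M₁ M₂) a → φ (ψ a) = a := by
    intro a ha; funext n
    simp only [hφdef, hψdef]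
    exact key (a n) (a (n+1)) (ha n)
  have hseq : ∀ x y (k : ℤ), SEquiv x k y → SEquiv (φ x) k (φ y) := by
    rintro x y k ⟨N, hN, h⟩
    refine ⟨N, hN, fun n hn => ?_⟩
    have hn' : (N : ℤ) ≤ (n : ℤ) := by exact_mod_cast hn
    have e1 : x n = y (((n:ℤ)-k).toNat) := h n hn
    have e2 : x (n+1) = y (((n:ℤ)-k).toNat + 1) := by
      have h3 := h (n+1) (le_trans hn (Nat.le_succ n))
      have ht : (((n+1:ℕ):ℤ) - k).toNat = ((n:ℤ)-k).toNat + 1 := by push_cast; omega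
      rwa [ht] at h3
    simp only [hφdef]
    rw [e1, e2]
  have hseq' : ∀ x y (k : ℤ), SEquiv (φ x) k (φ y) → SEquiv x k y := by
    rintro x y k ⟨N, hN, h⟩
    refine ⟨N, hN, fun n hn => ?_⟩
    calc x n = ψ (φ x) n := (congrFun (hψφ x) n).symm
      _ = ψ (φ y) (((n:ℤ)-k).toNat) := by simp only [hψdef]; rw [h n hn]
      _ = y (((n:ℤ)-k).toNat) := congrFun (hψφ y) _
  have hinj : ∀ x y : ℕ → V, φ x = φ y → x = y := by
    intro x y hxy
    rw [← hψφ x, ← hψφ y, hxy]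
  refine ⟨φ, ⟨fun x hx => hpf x hx, fun x _ y _ hxy => hinj x y hxy,
    fun a ha => ⟨ψ a, hpb a ha, hφψ a ha⟩⟩,
    fun x y _ _ k => ⟨hseq x y k, hseq' x y k⟩, ?_, ?_, ?_⟩
  · rintro ⟨x, k, y⟩ ⟨hx, hy, hxy⟩
    exact ⟨hpf x hx, hpf y hy, hseq x y k hxy⟩
  · rintro ⟨x, k, y⟩ ⟨hx, hy, hxy⟩ ⟨x', k', y'⟩ ⟨hx', hy', hxy'⟩ heq
    simp only [Prod.mk.injEq] at heq
    obtain ⟨e1, e2, e3⟩ := heq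
    exact Prod.ext (hinj x x' e1) (Prod.ext e2 (hinj y y' e3))
  · rintro ⟨a, k, b⟩ ⟨ha, hb, hab⟩
    refine ⟨(ψ a, k, ψ b), ⟨hpb a ha, hpb b hb, ?_⟩, ?_⟩
    · apply hseq'
      rw [hφψ a ha, hφψ b hb]
      exact hab
    · simp only [Prod.mk.injEq]
      exact ⟨hφψ a ha, by simp [hφψ b hb]⟩
end
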